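/- arXiv:2009.10111 — 3 statements merged into one kernel-verified Lean document; each statement's English description precedes it below -/
import Mathlib

section
/- Let $L_1, L_2$ be affine $d$-planes in $\mathbb{R}^n$ both intersecting the ball $0.5B$, where $B = B(x,r)$. Set $\mathcal{P}_i = \mathcal{H}^d|_{L_i}$. Then $\frac{1}{r^d} F_B(\mathcal{P}_1, \mathcal{P}_2) \le C\, \mathrm{dist}_H(L_1 \cap B, L_2 \cap B)$, where $\mathrm{dist}_H$ denotes the Hausdorff distance and $C$ depends only on $n$ and $d$. -/
open MeasureTheory Metric Set

noncomputable def Fdist {n : ℕ} (B : Set (EuclideanSpace ℝ (Fin n)))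
    (μ ν : Measure (EuclideanSpace ℝ (Fin n)))
    (f g : EuclideanSpace ℝ (Fin n) → ℝ) : ℝ :=
  ⨆ φ : {φ : EuclideanSpace ℝ (Fin n) → ℝ // LipschitzWith 1 φ ∧ Function.support φ ⊆ B},
    |(∫ x, φ.1 x * f x ∂μ) - ∫ x, φ.1 x * g x ∂ν|

open scoped ENNReal NNReal


noncomputable abbrev planeConst (d : ℕ) : ℝ≥0∞ :=
  ((((d:ℝ≥0) ^ ((1 / (2:ℝ≥0∞)).toReal)) : ℝ≥0) : ℝ≥0∞) ^ (d:ℝ) * (2:ℝ≥0∞) ^ d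

lemma planeConst_ne_top (d : ℕ) : planeConst d ≠ ⊤ := by
  apply ENNReal.mul_ne_top
  · exact ENNReal.rpow_ne_top_of_nonneg (by positivity) ENNReal.coe_ne_top
  · exact ENNReal.pow_ne_top (by norm_num)

lemma plane_bound (n d : ℕ) (L : AffineSubspace ℝ (EuclideanSpace ℝ (Fin n)))
    (hL : Module.finrank ℝ L.direction = d) {q : EuclideanSpace ℝ (Fin n)} (hq : q ∈ L)
    {R : ℝ} (hR : 0 ≤ R) :
    μH[(d : ℝ)] ((L : Set (EuclideanSpace ℝ (Fin n))) ∩ closedBall q R) ≤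
      planeConst d * ENNReal.ofReal (R ^ d) := by
  classical
  subst hL
  set W := L.direction
  set m := Module.finrank ℝ W with hm
  let b := stdOrthonormalBasis ℝ W
  let g : EuclideanSpace ℝ (Fin m) → EuclideanSpace ℝ (Fin n) :=
    fun v => q + ((b.repr.symm v : W) : EuclideanSpace ℝ (Fin n))
  have hgiso : Isometry g := by
    apply Isometry.of_dist_eq
    intro v w
    have : g v - g w = ((b.repr.symm v - b.repr.symm w : W) : EuclideanSpace ℝ (Fin n)) := by
      simp [g]
    rw [dist_eq_norm, this]
    rw [← Submodule.coe_norm, ← map_sub, b.repr.symm.norm_map, ← dist_eq_norm]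
  have himg : (L : Set (EuclideanSpace ℝ (Fin n))) ∩ closedBall q R ⊆ g '' closedBall 0 R := by
    rintro y ⟨hyL, hyB⟩
    have hw : y - q ∈ W := by
      simpa [vsub_eq_sub] using AffineSubspace.vsub_mem_direction hyL hq
    refine ⟨b.repr ⟨y - q, hw⟩, ?_, ?_⟩
    · rw [mem_closedBall, dist_zero_right, b.repr.norm_map, Submodule.coe_norm]
      simpa [dist_eq_norm] using hyB
    · simp only [g, LinearIsometryEquiv.symm_apply_apply]
      simp
  have hpi : μH[(m : ℝ)] (closedBall (0 : EuclideanSpace ℝ (Fin m)) R) ≤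
      planeConst m * ENNReal.ofReal (R ^ m) := by
    have ha := PiLp.antilipschitzWith_ofLp 2 (fun _ : Fin m => ℝ)
    have h1 := ha.le_hausdorffMeasure_image (d := (m:ℝ)) (by positivity) (closedBall 0 R)
    have himg2 : (WithLp.equiv 2 (Fin m → ℝ)) '' closedBall 0 R ⊆ closedBall (0 : Fin m → ℝ) R := by
      rintro _ ⟨v, hv, rfl⟩
      have := (PiLp.lipschitzWith_ofLp 2 (fun _ : Fin m => ℝ)).dist_le_mul v 0
      simp only [mem_closedBall] at hv ⊢
      calc dist (WithLp.equiv 2 (Fin m → ℝ) v) 0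
          = dist (WithLp.equiv 2 (Fin m → ℝ) v) (WithLp.equiv 2 (Fin m → ℝ) 0) := by simp
        _ ≤ dist v 0 := by simpa using this
        _ ≤ R := hv
    have h2 : μH[(m:ℝ)] ((WithLp.equiv 2 (Fin m → ℝ)) '' closedBall 0 R) ≤
        ENNReal.ofReal ((2 * R) ^ m) := by
      calc μH[(m:ℝ)] ((WithLp.equiv 2 (Fin m → ℝ)) '' closedBall 0 R)
          ≤ μH[(m:ℝ)] (closedBall (0 : Fin m → ℝ) R) := measure_mono himg2
        _ = ENNReal.ofReal ((2 * R) ^ m) := by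
            have hcard : ((Fintype.card (Fin m) : ℝ)) = (m : ℝ) := by simp
            rw [← hcard, hausdorffMeasure_pi_real, Real.volume_pi_closedBall _ hR,
              Fintype.card_fin]
    calc μH[(m:ℝ)] (closedBall (0 : EuclideanSpace ℝ (Fin m)) R)
        ≤ (↑((Fintype.card (Fin m) : ℝ≥0) ^ (1 / (2:ℝ≥0∞)).toReal) : ℝ≥0∞) ^ (m:ℝ) *
            μH[(m:ℝ)] ((WithLp.equiv 2 (Fin m → ℝ)) '' closedBall 0 R) := h1
      _ ≤ (↑((m : ℝ≥0) ^ (1 / (2:ℝ≥0∞)).toReal) : ℝ≥0∞) ^ (m:ℝ) *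
            ENNReal.ofReal ((2 * R) ^ m) := by
          rw [Fintype.card_fin]
          exact mul_le_mul_right h2 _
      _ = planeConst m * ENNReal.ofReal (R ^ m) := by
          rw [planeConst, mul_pow, ENNReal.ofReal_mul (by positivity), ENNReal.ofReal_pow (by norm_num)]
          ring_nf
          rw [ENNReal.ofReal_ofNat]
          ring
  calc μH[(m : ℝ)] ((L : Set (EuclideanSpace ℝ (Fin n))) ∩ closedBall q R)
      ≤ μH[(m : ℝ)] (g '' closedBall 0 R) := measure_mono himg
    _ = μH[(m : ℝ)] (closedBall (0 : EuclideanSpace ℝ (Fin m)) R) :=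
        hgiso.hausdorffMeasure_image (Or.inl (by positivity)) _
    _ ≤ planeConst m * ENNReal.ofReal (R ^ m) := hpi

-- bound |φ| ≤ r for 1-Lipschitz φ supported in ball x r (needs n ≥ 1)
lemma phi_le {n : ℕ} (hn : n ≠ 0) {x : EuclideanSpace ℝ (Fin n)} {r : ℝ} (hr : 0 < r)
    {φ : EuclideanSpace ℝ (Fin n) → ℝ} (hφ : LipschitzWith 1 φ)
    (hsupp : Function.support φ ⊆ ball x r) (y : EuclideanSpace ℝ (Fin n)) : |φ y| ≤ r := by
  have hex : ∃ z, z ∉ ball x r ∧ dist y z ≤ r := by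
    haveI : NeZero n := ⟨hn⟩
    by_cases hy : y = x
    · refine ⟨x + r • EuclideanSpace.single (0 : Fin n) (1:ℝ), ?_, ?_⟩
      · simp only [mem_ball, not_lt]
        rw [dist_comm, dist_self_add_right, norm_smul, EuclideanSpace.norm_single]
        simp [abs_of_pos hr]
      · rw [hy, dist_self_add_right, norm_smul, EuclideanSpace.norm_single]
        simp [abs_of_pos hr, hr.le]
    · have hv : y - x ≠ 0 := sub_ne_zero.2 hy
      have hvn : 0 < ‖y - x‖ := norm_pos_iff.2 hv
      refine ⟨y + (r / ‖y - x‖) • (y - x), ?_, ?_⟩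
      · simp only [mem_ball, not_lt]
        have : y + (r / ‖y - x‖) • (y - x) - x = (1 + r / ‖y - x‖) • (y - x) := by
          rw [add_smul, one_smul]; abel
        rw [dist_eq_norm, this, norm_smul, Real.norm_eq_abs,
          abs_of_pos (by positivity : (0:ℝ) < 1 + r / ‖y - x‖)]
        have : (1 + r / ‖y - x‖) * ‖y - x‖ = ‖y - x‖ + r := by
          field_simp
        rw [this]; linarith
      · rw [dist_self_add_right, norm_smul, Real.norm_eq_abs,
          abs_of_pos (by positivity : (0:ℝ) < r / ‖y - x‖)]
        rw [div_mul_cancel₀ _ hvn.ne']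
  obtain ⟨z, hz, hyz⟩ := hex
  have hφz : φ z = 0 := by
    by_contra h
    exact hz (hsupp h)
  have := hφ.dist_le_mul y z
  rw [Real.dist_eq, hφz, sub_zero] at this
  simpa using this.trans (by simpa using hyz)

-- integrable + integral bound helper
lemma int_helper {n : ℕ} (μ : Measure (EuclideanSpace ℝ (Fin n)))
    {ψ : EuclideanSpace ℝ (Fin n) → ℝ} (hψ : AEStronglyMeasurable ψ μ)
    {s : Set (EuclideanSpace ℝ (Fin n))} (hs : MeasurableSet s) (hμs : μ s ≠ ⊤)
    {c : ℝ} (hb : ∀ᵐ y ∂μ, |ψ y| ≤ s.indicator (fun _ => c) y) :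
    Integrable ψ μ ∧ |∫ y, ψ y ∂μ| ≤ c * (μ s).toReal := by
  have hgint : Integrable (s.indicator (fun _ => c)) μ := by
    rw [integrable_indicator_iff hs]
    exact integrableOn_const hμs
  have hint : Integrable ψ μ := by
    refine hgint.mono' hψ ?_
    filter_upwards [hb] with y hy
    simpa [Real.norm_eq_abs] using hy
  refine ⟨hint, ?_⟩
  calc |∫ y, ψ y ∂μ| ≤ ∫ y, |ψ y| ∂μ := by
        simpa [Real.norm_eq_abs] using norm_integral_le_integral_norm ψ (μ := μ)
    _ ≤ ∫ y, s.indicator (fun _ => c) y ∂μ := by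
        refine integral_mono_ae hint.abs hgint hb
    _ = c * (μ s).toReal := by
        rw [integral_indicator_const _ hs, smul_eq_mul, mul_comm, measureReal_def]

-- elementary inequality
lemma eps_ineq (d : ℕ) {ε : ℝ} (h0 : 0 ≤ ε) (h2 : ε ≤ 1/2) :
    ((1 - ε) ^ d)⁻¹ - 1 ≤ d * 2 ^ d * ε := by
  have h1 : (1:ℝ)/2 ≤ 1 - ε := by linarith
  have hpos : (0:ℝ) < (1 - ε) ^ d := by positivity
  have h3 : 1 - (d:ℝ) * ε ≤ (1 - ε) ^ d := by
    have := one_add_mul_le_pow (a := -ε) (by linarith) d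
    simpa [sub_eq_add_neg, mul_neg] using this
  have h4 : (1:ℝ) ≤ 2 ^ d * (1 - ε) ^ d := by
    have : (1:ℝ) ≤ 2 * (1 - ε) := by linarith
    calc (1:ℝ) = 1 ^ d := (one_pow d).symm
      _ ≤ (2 * (1 - ε)) ^ d := pow_le_pow_left₀ (by norm_num) this d
      _ = 2 ^ d * (1 - ε) ^ d := mul_pow _ _ _
  rw [sub_le_iff_le_add, inv_le_iff_one_le_mul₀ hpos]
  nlinarith [mul_nonneg (mul_nonneg (Nat.cast_nonneg (α := ℝ) d) h0) (sub_nonneg.2 h4), h3]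

-- projection minimality in affine form
lemma proj_min {n : ℕ} (W : Submodule ℝ (EuclideanSpace ℝ (Fin n))) (a : EuclideanSpace ℝ (Fin n))
    {w : EuclideanSpace ℝ (Fin n)} (hw : w ∈ W) :
    ‖a - (Submodule.orthogonalProjectionOnto W a : EuclideanSpace ℝ (Fin n))‖ ≤ ‖a - w‖ := by
  rw [← Submodule.starProjection_apply, Submodule.starProjection_minimal]
  exact ciInf_le ⟨0, by rintro _ ⟨v, rfl⟩; positivity⟩ (⟨w, hw⟩ : W)
lemma le_infDist' {X : Type*} [PseudoMetricSpace X] {s : Set X} (hs : s.Nonempty) {x : X} {b : ℝ}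
    (h : ∀ y ∈ s, b ≤ dist x y) : b ≤ infDist x s := by
  rw [infDist_eq_iInf]
  haveI := hs.to_subtype
  exact le_ciInf fun y => h y y.2

lemma restrict_le {n d : ℕ} (L : AffineSubspace ℝ (EuclideanSpace ℝ (Fin n)))
    (hL : Module.finrank ℝ L.direction = d) {q : EuclideanSpace ℝ (Fin n)} (hq : q ∈ L)
    {R : ℝ} (hR : 0 ≤ R) {s : Set (EuclideanSpace ℝ (Fin n))} (hs : MeasurableSet s)
    (hsub : (L : Set (EuclideanSpace ℝ (Fin n))) ∩ s ⊆ closedBall q R) :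
    (μH[(d:ℝ)].restrict (L : Set (EuclideanSpace ℝ (Fin n)))) s ≤
      planeConst d * ENNReal.ofReal (R ^ d) := by
  rw [Measure.restrict_apply hs]
  refine le_trans (measure_mono ?_) (plane_bound n d L hL hq hR)
  exact fun y hy => ⟨hy.2, hsub ⟨hy.2, hy.1⟩⟩

lemma restrict_le_real {n d : ℕ} (L : AffineSubspace ℝ (EuclideanSpace ℝ (Fin n)))
    (hL : Module.finrank ℝ L.direction = d) {q : EuclideanSpace ℝ (Fin n)} (hq : q ∈ L)
    {R : ℝ} (hR : 0 ≤ R) {s : Set (EuclideanSpace ℝ (Fin n))} (hs : MeasurableSet s)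
    (hsub : (L : Set (EuclideanSpace ℝ (Fin n))) ∩ s ⊆ closedBall q R) :
    ((μH[(d:ℝ)].restrict (L : Set (EuclideanSpace ℝ (Fin n)))) s).toReal ≤
      (planeConst d).toReal * R ^ d := by
  have h := restrict_le L hL hq hR hs hsub
  have h2 := ENNReal.toReal_mono
    (ENNReal.mul_ne_top (planeConst_ne_top d) ENNReal.ofReal_ne_top) h
  rwa [ENNReal.toReal_mul, ENNReal.toReal_ofReal (by positivity)] at h2

lemma restrict_ne_top {n d : ℕ} (L : AffineSubspace ℝ (EuclideanSpace ℝ (Fin n)))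
    (hL : Module.finrank ℝ L.direction = d) {q : EuclideanSpace ℝ (Fin n)} (hq : q ∈ L)
    {R : ℝ} (hR : 0 ≤ R) {s : Set (EuclideanSpace ℝ (Fin n))} (hs : MeasurableSet s)
    (hsub : (L : Set (EuclideanSpace ℝ (Fin n))) ∩ s ⊆ closedBall q R) :
    (μH[(d:ℝ)].restrict (L : Set (EuclideanSpace ℝ (Fin n)))) s ≠ ⊤ :=
  ne_top_of_le_ne_top (ENNReal.mul_ne_top (planeConst_ne_top d) ENNReal.ofReal_ne_top)
    (restrict_le L hL hq hR hs hsub)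

set_option maxHeartbeats 2000000 in
lemma key (n d : ℕ) (hn : n ≠ 0) :
    ∀ (x : EuclideanSpace ℝ (Fin n)) (r : ℝ), 0 < r →
      ∀ (L₁ L₂ : AffineSubspace ℝ (EuclideanSpace ℝ (Fin n))),
        Module.finrank ℝ L₁.direction = d → Module.finrank ℝ L₂.direction = d →
        ((L₁ : Set (EuclideanSpace ℝ (Fin n))) ∩ ball x (r / 2)).Nonempty →
        ((L₂ : Set (EuclideanSpace ℝ (Fin n))) ∩ ball x (r / 2)).Nonempty →
        ∀ φ : EuclideanSpace ℝ (Fin n) → ℝ, LipschitzWith 1 φ →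
          Function.support φ ⊆ ball x r →
          |(∫ y, φ y ∂(μH[(d:ℝ)].restrict (L₁ : Set (EuclideanSpace ℝ (Fin n))))) -
              ∫ y, φ y ∂(μH[(d:ℝ)].restrict (L₂ : Set (EuclideanSpace ℝ (Fin n))))| ≤
            ((19 * 5^d + 4*d*4^d + 16*2^d) * (planeConst d).toReal + 1) *
              hausdorffDist ((L₁ : Set (EuclideanSpace ℝ (Fin n))) ∩ ball x r)
                ((L₂ : Set (EuclideanSpace ℝ (Fin n))) ∩ ball x r) * r ^ d := by
  intro x r hr L₁ L₂ hd₁ hd₂ hne₁ hne₂ φ hφ hsupp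
  set Λ := (planeConst d).toReal with hΛdef
  have hΛ0 : 0 ≤ Λ := ENNReal.toReal_nonneg
  obtain ⟨p₁, hp₁L', hp₁B⟩ := hne₁
  obtain ⟨p₂, hp₂L', hp₂B⟩ := hne₂
  have hp₁L : p₁ ∈ L₁ := hp₁L'
  have hp₂L : p₂ ∈ L₂ := hp₂L'
  set δ := hausdorffDist ((L₁ : Set (EuclideanSpace ℝ (Fin n))) ∩ ball x r)
      ((L₂ : Set (EuclideanSpace ℝ (Fin n))) ∩ ball x r) with hδdef
  have hδ0 : 0 ≤ δ := hausdorffDist_nonneg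
  have hL₁m : MeasurableSet (L₁ : Set (EuclideanSpace ℝ (Fin n))) :=
    L₁.closed_of_finiteDimensional.measurableSet
  have hL₂m : MeasurableSet (L₂ : Set (EuclideanSpace ℝ (Fin n))) :=
    L₂.closed_of_finiteDimensional.measurableSet
  set μ₁ := μH[(d:ℝ)].restrict (L₁ : Set (EuclideanSpace ℝ (Fin n))) with hμ₁def
  set μ₂ := μH[(d:ℝ)].restrict (L₂ : Set (EuclideanSpace ℝ (Fin n))) with hμ₂def
  have hp₁r : p₁ ∈ ball x r := ball_subset_ball (by linarith) hp₁B
  have hp₂r : p₂ ∈ ball x r := ball_subset_ball (by linarith) hp₂B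
  have hrd : (0:ℝ) ≤ r ^ d := by positivity
  -- membership-based ball inclusions
  have hsub₁ : (L₁ : Set (EuclideanSpace ℝ (Fin n))) ∩ ball x r ⊆ closedBall p₁ (2*r) := by
    rintro y ⟨_, hy⟩
    rw [mem_closedBall]
    have h1 : dist y x < r := mem_ball.1 hy
    have h2 : dist p₁ x < r/2 := mem_ball.1 hp₁B
    calc dist y p₁ ≤ dist y x + dist x p₁ := dist_triangle _ _ _
      _ ≤ 2*r := by rw [dist_comm x p₁]; linarith
  have hsub₂ : (L₂ : Set (EuclideanSpace ℝ (Fin n))) ∩ ball x r ⊆ closedBall p₂ (2*r) := by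
    rintro y ⟨_, hy⟩
    rw [mem_closedBall]
    have h1 : dist y x < r := mem_ball.1 hy
    have h2 : dist p₂ x < r/2 := mem_ball.1 hp₂B
    calc dist y p₂ ≤ dist y x + dist x p₂ := dist_triangle _ _ _
      _ ≤ 2*r := by rw [dist_comm x p₂]; linarith
  have hμ₁ball := restrict_le_real L₁ hd₁ hp₁L (by positivity : (0:ℝ) ≤ 2*r) measurableSet_ball hsub₁
  have hμ₂ball := restrict_le_real L₂ hd₂ hp₂L (by positivity : (0:ℝ) ≤ 2*r) measurableSet_ball hsub₂
  have hμ₁ne := restrict_ne_top L₁ hd₁ hp₁L (by positivity : (0:ℝ) ≤ 2*r) measurableSet_ball hsub₁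
  have hμ₂ne := restrict_ne_top L₂ hd₂ hp₂L (by positivity : (0:ℝ) ≤ 2*r) measurableSet_ball hsub₂
  have hφcont : Continuous φ := hφ.continuous
  have hφzero : ∀ y ∉ ball x r, φ y = 0 := fun y hy => by
    by_contra h; exact hy (hsupp h)
  have hφb : ∀ y, |φ y| ≤ (ball x r).indicator (fun _ => r) y := by
    intro y
    by_cases hy : y ∈ ball x r
    · rw [indicator_of_mem hy]; exact phi_le hn hr hφ hsupp y
    · rw [indicator_of_notMem hy, hφzero y hy]; simp
  have hφr : ∀ y, |φ y| ≤ r := by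
    intro y
    refine (hφb y).trans ?_
    by_cases hy : y ∈ ball x r
    · rw [indicator_of_mem hy]
    · rw [indicator_of_notMem hy]; exact hr.le
  obtain ⟨hφint₁, hφbd₁⟩ := int_helper μ₁ hφcont.aestronglyMeasurable measurableSet_ball hμ₁ne
    (ae_of_all _ hφb)
  obtain ⟨hφint₂, hφbd₂⟩ := int_helper μ₂ hφcont.aestronglyMeasurable measurableSet_ball hμ₂ne
    (ae_of_all _ hφb)
  by_cases hcase : δ ≤ r/8
  case neg =>
    -- trivial case : δ > r/8
    have h8 : r < 8*δ := by linarith [not_le.1 hcase]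
    have h1 : |∫ y, φ y ∂μ₁| ≤ r * (Λ * (2*r)^d) :=
      hφbd₁.trans (by gcongr)
    have h2 : |∫ y, φ y ∂μ₂| ≤ r * (Λ * (2*r)^d) :=
      hφbd₂.trans (by gcongr)
    have h3 : |(∫ y, φ y ∂μ₁) - ∫ y, φ y ∂μ₂| ≤ 2 * (r * (Λ * (2*r)^d)) := by
      calc |(∫ y, φ y ∂μ₁) - ∫ y, φ y ∂μ₂| ≤ |∫ y, φ y ∂μ₁| + |∫ y, φ y ∂μ₂| := abs_sub _ _
        _ ≤ 2 * (r * (Λ * (2*r)^d)) := by linarith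
    refine h3.trans ?_
    have hpow : (2*r)^d = 2^d * r^d := mul_pow 2 r d
    rw [hpow]
    have hmain : 2 * (r * (Λ * (2^d * r^d))) ≤ (16*2^d) * Λ * δ * r^d := by
      have h2d : (0:ℝ) ≤ 2^d := by positivity
      nlinarith [mul_nonneg (mul_nonneg hΛ0 h2d) hrd, mul_nonneg hΛ0 h2d,
        mul_nonneg (mul_nonneg (mul_nonneg hΛ0 h2d) hrd) hδ0]
    refine hmain.trans ?_
    have hC : (16*2^d) * Λ ≤ (19 * 5^d + 4*d*4^d + 16*2^d) * Λ + 1 := by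
      have : (0:ℝ) ≤ (19 * 5^d + 4*(d:ℝ)*4^d) * Λ := by positivity
      nlinarith
    calc (16*2^d) * Λ * δ * r^d ≤ ((19 * 5^d + 4*d*4^d + 16*2^d) * Λ + 1) * δ * r^d := by
          have := mul_nonneg hδ0 hrd
          nlinarith
      _ = _ := by ring
  case pos =>
    haveI : Nonempty L₂ := ⟨⟨p₂, hp₂L⟩⟩
    set W₁ := L₁.direction with hW₁
    set W₂ := L₂.direction with hW₂
    set P := Submodule.orthogonalProjectionOnto W₂ with hPdef
    set f : EuclideanSpace ℝ (Fin n) → EuclideanSpace ℝ (Fin n) :=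
      fun y => p₂ + ((P (y - p₂)) : EuclideanSpace ℝ (Fin n)) with hfdef
    have hfsub : ∀ y z, f y - f z = ((P (y - z)) : EuclideanSpace ℝ (Fin n)) := by
      intro y z
      have e : (y - p₂) - (z - p₂) = y - z := by abel
      simp only [hfdef]
      rw [add_sub_add_left_eq_sub, ← Submodule.coe_sub, ← map_sub, e]
    have hfmem : ∀ y, f y ∈ L₂ := by
      intro y
      have h := AffineSubspace.vadd_mem_of_mem_direction (P (y - p₂)).2 hp₂L
      rw [vadd_eq_add, add_comm] at h
      exact h
    have hfmin : ∀ y, ∀ z ∈ L₂, ‖y - f y‖ ≤ ‖y - z‖ := by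
      intro y z hz
      have hzW : z - p₂ ∈ W₂ := by
        simpa [vsub_eq_sub] using AffineSubspace.vsub_mem_direction hz hp₂L
      have h1 : y - f y = (y - p₂) - ((P (y - p₂)) : EuclideanSpace ℝ (Fin n)) := by
        simp only [hfdef]; abel
      have h2 : y - z = (y - p₂) - (z - p₂) := by abel
      rw [h1, h2]
      exact proj_min W₂ (y - p₂) hzW
    have hflip : LipschitzWith 1 f := by
      refine LipschitzWith.of_dist_le_mul fun y z => ?_
      rw [dist_eq_norm, hfsub, NNReal.coe_one, one_mul, dist_eq_norm]
      calc ‖((P (y - z)) : EuclideanSpace ℝ (Fin n))‖ = ‖P (y - z)‖ :=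
            (Submodule.coe_norm _).symm
        _ ≤ 1 * ‖y - z‖ := P.le_of_opNorm_le (Submodule.orthogonalProjectionOnto_norm_le W₂) _
        _ = ‖y - z‖ := one_mul _
    have hEdist : EMetric.hausdorffEdist ((L₁ : Set (EuclideanSpace ℝ (Fin n))) ∩ ball x r)
        ((L₂ : Set (EuclideanSpace ℝ (Fin n))) ∩ ball x r) ≠ ⊤ :=
      hausdorffEdist_ne_top_of_nonempty_of_bounded ⟨p₁, hp₁L', hp₁r⟩ ⟨p₂, hp₂L', hp₂r⟩
        (isBounded_ball.subset inter_subset_right) (isBounded_ball.subset inter_subset_right)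
    have hd1 : ∀ y ∈ (L₁ : Set (EuclideanSpace ℝ (Fin n))) ∩ ball x r, ‖y - f y‖ ≤ δ := by
      intro y hy
      have h1 : infDist y ((L₂ : Set (EuclideanSpace ℝ (Fin n))) ∩ ball x r) ≤ δ := by
        have h := infDist_le_infDist_add_hausdorffDist (x := y) hEdist
        rwa [infDist_zero_of_mem hy, zero_add] at h
      have h2 : ‖y - f y‖ ≤ infDist y ((L₂ : Set (EuclideanSpace ℝ (Fin n))) ∩ ball x r) := by
        refine le_infDist' (s := (L₂ : Set (EuclideanSpace ℝ (Fin n))) ∩ ball x r)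
          ⟨p₂, ⟨hp₂L', hp₂r⟩⟩ fun z hz => ?_
        rw [dist_eq_norm]
        exact hfmin y z hz.1
      linarith
    have hdir : ∀ w ∈ W₁, ‖((P w) : EuclideanSpace ℝ (Fin n)) - w‖ ≤ (4*δ/r) * ‖w‖ := by
      intro w hw
      rcases eq_or_ne w 0 with rfl | hw0
      · simp
      · have hwn : 0 < ‖w‖ := norm_pos_iff.2 hw0
        set u := (r / (2*‖w‖)) • w with hu
        have huW : u ∈ W₁ := W₁.smul_mem _ hw
        have hun : ‖u‖ = r/2 := by
          rw [hu, norm_smul, Real.norm_eq_abs, abs_of_pos (by positivity)]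
          field_simp
        have hyL : p₁ + u ∈ L₁ := by
          have h := AffineSubspace.vadd_mem_of_mem_direction huW hp₁L
          rw [vadd_eq_add, add_comm] at h
          exact h
        have hyB : p₁ + u ∈ ball x r := by
          rw [mem_ball]
          have h1 : dist (p₁ + u) x ≤ dist (p₁ + u) p₁ + dist p₁ x := dist_triangle _ _ _
          have h2 : dist (p₁ + u) p₁ = ‖u‖ := by
            rw [dist_comm, dist_self_add_right]
          have h3 : dist p₁ x < r/2 := mem_ball.1 hp₁B
          rw [h2, hun] at h1
          linarith
        have h1 : ‖p₁ - f p₁‖ ≤ δ := hd1 p₁ ⟨hp₁L', hp₁r⟩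
        have h2 : ‖(p₁ + u) - f (p₁ + u)‖ ≤ δ := hd1 _ ⟨hyL, hyB⟩
        have e1 : f (p₁ + u) - f p₁ = ((P u) : EuclideanSpace ℝ (Fin n)) := by
          rw [hfsub]
          congr 2
          abel
        have h3 : ‖((P u) : EuclideanSpace ℝ (Fin n)) - u‖ ≤ 2*δ := by
          have e2 : ((P u) : EuclideanSpace ℝ (Fin n)) - u =
              (p₁ - f p₁) - ((p₁ + u) - f (p₁ + u)) := by
            rw [← e1]; abel
          rw [e2]
          exact (norm_sub_le _ _).trans (by linarith)
        have hscale : w = ((2*‖w‖)/r) • u := by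
          rw [hu, smul_smul]
          rw [show (2*‖w‖)/r * (r / (2*‖w‖)) = 1 by field_simp]
          rw [one_smul]
        calc ‖((P w) : EuclideanSpace ℝ (Fin n)) - w‖
            = ‖((2*‖w‖)/r) • (((P u) : EuclideanSpace ℝ (Fin n)) - u)‖ := by
              conv_lhs => rw [hscale]
              rw [_root_.map_smul, Submodule.coe_smul, smul_sub]
          _ = ((2*‖w‖)/r) * ‖((P u) : EuclideanSpace ℝ (Fin n)) - u‖ := by
              rw [norm_smul, Real.norm_eq_abs, abs_of_pos (by positivity)]
          _ ≤ ((2*‖w‖)/r) * (2*δ) := by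
              have : (0:ℝ) ≤ (2*‖w‖)/r := by positivity
              exact mul_le_mul_of_nonneg_left h3 this
          _ = (4*δ/r) * ‖w‖ := by field_simp; ring
    set ε := 4*δ/r with hεdef
    have hε0 : 0 ≤ ε := by positivity
    have hε2 : ε ≤ 1/2 := by
      rw [hεdef, div_le_iff₀ hr]
      linarith
    have hanti : ∀ y ∈ (L₁ : Set (EuclideanSpace ℝ (Fin n))),
        ∀ z ∈ (L₁ : Set (EuclideanSpace ℝ (Fin n))), (1-ε) * ‖y - z‖ ≤ ‖f y - f z‖ := by
      intro y hy z hz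
      have hyz : y - z ∈ W₁ := by
        simpa [vsub_eq_sub] using AffineSubspace.vsub_mem_direction (SetLike.mem_coe.1 hy)
          (SetLike.mem_coe.1 hz)
      have h1 := hdir _ hyz
      have h2 : ‖y - z‖ - ‖((P (y - z)) : EuclideanSpace ℝ (Fin n))‖ ≤
          ‖((P (y - z)) : EuclideanSpace ℝ (Fin n)) - (y - z)‖ := by
        exact (norm_sub_norm_le (y - z) (((P (y - z)) : EuclideanSpace ℝ (Fin n)))).trans
          (le_of_eq (norm_sub_rev _ _))
      rw [hfsub]
      nlinarith [norm_nonneg (y - z)]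
    have hinj : InjOn f (L₁ : Set (EuclideanSpace ℝ (Fin n))) := by
      intro y hy z hz hfyz
      have h := hanti y hy z hz
      rw [hfyz, sub_self, norm_zero] at h
      have h2 : ‖y - z‖ ≤ 0 := by nlinarith [norm_nonneg (y - z)]
      have h3 : y - z = 0 := norm_le_zero_iff.1 h2
      exact sub_eq_zero.1 h3
    set T : W₁ →ₗ[ℝ] W₂ := P.toLinearMap.comp W₁.subtype with hTdef
    have hTapp : ∀ w : W₁, T w = P (w : EuclideanSpace ℝ (Fin n)) := fun w => rfl
    have hTker : LinearMap.ker T = ⊥ := by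
      rw [LinearMap.ker_eq_bot']
      intro w hw0
      have h1 := hdir (w : EuclideanSpace ℝ (Fin n)) w.2
      have h2 : ((P ((w : EuclideanSpace ℝ (Fin n)))) : EuclideanSpace ℝ (Fin n)) = 0 := by
        rw [← hTapp, hw0]
        simp
      rw [h2, zero_sub, norm_neg] at h1
      have h3 : ‖(w : EuclideanSpace ℝ (Fin n))‖ ≤ 0 := by
        nlinarith [norm_nonneg (w : EuclideanSpace ℝ (Fin n))]
      have h4 : (w : EuclideanSpace ℝ (Fin n)) = 0 := norm_le_zero_iff.1 h3
      exact Subtype.ext h4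
    have hTrange : LinearMap.range T = ⊤ := by
      apply Submodule.eq_top_of_finrank_eq
      have h := LinearMap.finrank_range_add_finrank_ker T
      rw [hTker, finrank_bot, add_zero] at h
      rw [h, hd₁, hd₂]
    have hsurj : (L₂ : Set (EuclideanSpace ℝ (Fin n))) ⊆
        f '' (L₁ : Set (EuclideanSpace ℝ (Fin n))) := by
      intro q hq
      have hqW : q - f p₁ ∈ W₂ := by
        simpa [vsub_eq_sub] using
          AffineSubspace.vsub_mem_direction (SetLike.mem_coe.1 hq) (hfmem p₁)
      obtain ⟨w, hw⟩ := (LinearMap.range_eq_top.1 hTrange) ⟨q - f p₁, hqW⟩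
      have hyL : p₁ + (w : EuclideanSpace ℝ (Fin n)) ∈ L₁ := by
        have h := AffineSubspace.vadd_mem_of_mem_direction w.2 hp₁L
        rw [vadd_eq_add, add_comm] at h
        exact h
      refine ⟨p₁ + (w : EuclideanSpace ℝ (Fin n)), hyL, ?_⟩
      have e1 : f (p₁ + (w : EuclideanSpace ℝ (Fin n))) - f p₁ =
          ((P ((w : EuclideanSpace ℝ (Fin n)))) : EuclideanSpace ℝ (Fin n)) := by
        rw [hfsub]
        congr 2
        abel
      have e2 : ((P ((w : EuclideanSpace ℝ (Fin n)))) : EuclideanSpace ℝ (Fin n)) = q - f p₁ := by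
        rw [← hTapp, hw]
      have := e1.trans e2
      have := sub_left_inj.1 this
      exact this
    -- inverse map
    set σ := Function.invFunOn f (L₁ : Set (EuclideanSpace ℝ (Fin n))) with hσdef
    have hσmem : ∀ q ∈ (L₂ : Set (EuclideanSpace ℝ (Fin n))),
        σ q ∈ (L₁ : Set (EuclideanSpace ℝ (Fin n))) ∧ f (σ q) = q := by
      intro q hq
      obtain ⟨y, hy, hyq⟩ := hsurj hq
      exact ⟨Function.invFunOn_mem ⟨y, hy, hyq⟩, Function.invFunOn_eq ⟨y, hy, hyq⟩⟩
    set k : ℝ≥0 := (Real.toNNReal (1-ε))⁻¹ with hkdef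
    have h1ε : (0:ℝ) < 1 - ε := by linarith
    have hk_coe : (k : ℝ) = (1-ε)⁻¹ := by
      rw [hkdef, NNReal.coe_inv, Real.coe_toNNReal _ h1ε.le]
    have hσlip : LipschitzOnWith k σ (L₂ : Set (EuclideanSpace ℝ (Fin n))) := by
      rw [lipschitzOnWith_iff_dist_le_mul]
      intro q hq q' hq'
      obtain ⟨hσq, hfq⟩ := hσmem q hq
      obtain ⟨hσq', hfq'⟩ := hσmem q' hq'
      have h := hanti _ hσq _ hσq'
      rw [hfq, hfq'] at h
      rw [dist_eq_norm, dist_eq_norm, hk_coe, inv_mul_eq_div, le_div_iff₀ h1ε]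
      linarith
    -- measures
    have hfcont : Continuous f := by
      simp only [hfdef]
      exact continuous_const.add
        ((continuous_subtype_val.comp P.continuous).comp (continuous_id.sub continuous_const))
    have hfmeas : Measurable f := hfcont.measurable
    set ν := μ₁.map f with hνdef
    have hν_apply : ∀ A : Set (EuclideanSpace ℝ (Fin n)), MeasurableSet A →
        ν A = μH[(d:ℝ)] (f ⁻¹' A ∩ (L₁ : Set (EuclideanSpace ℝ (Fin n)))) := by
      intro A hA
      rw [hνdef, Measure.map_apply hfmeas hA, hμ₁def, Measure.restrict_apply (hfmeas hA)]
    have hμ₂_le_ν : μ₂ ≤ ν := by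
      rw [Measure.le_iff]
      intro A hA
      rw [hν_apply A hA, hμ₂def, Measure.restrict_apply hA]
      have hsub : A ∩ (L₂ : Set (EuclideanSpace ℝ (Fin n))) ⊆
          f '' (f ⁻¹' A ∩ (L₁ : Set (EuclideanSpace ℝ (Fin n)))) := by
        rintro q ⟨hqA, hqL⟩
        obtain ⟨y, hy, rfl⟩ := hsurj hqL
        exact ⟨y, ⟨hqA, hy⟩, rfl⟩
      calc μH[(d:ℝ)] (A ∩ (L₂ : Set (EuclideanSpace ℝ (Fin n))))
          ≤ μH[(d:ℝ)] (f '' (f ⁻¹' A ∩ (L₁ : Set (EuclideanSpace ℝ (Fin n))))) :=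
            measure_mono hsub
        _ ≤ ((1:ℝ≥0) : ℝ≥0∞)^(d:ℝ) * μH[(d:ℝ)] (f ⁻¹' A ∩ (L₁ : Set (EuclideanSpace ℝ (Fin n)))) :=
            hflip.hausdorffMeasure_image_le (by positivity) _
        _ = μH[(d:ℝ)] (f ⁻¹' A ∩ (L₁ : Set (EuclideanSpace ℝ (Fin n)))) := by
            simp
    have hν_le : ν ≤ ((k : ℝ≥0∞)^(d:ℝ)) • μ₂ := by
      rw [Measure.le_iff]
      intro A hA
      rw [hν_apply A hA, Measure.smul_apply, hμ₂def, Measure.restrict_apply hA, smul_eq_mul]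
      have hsub : f ⁻¹' A ∩ (L₁ : Set (EuclideanSpace ℝ (Fin n))) ⊆
          σ '' (A ∩ (L₂ : Set (EuclideanSpace ℝ (Fin n)))) := by
        rintro y ⟨hyA, hyL⟩
        exact ⟨f y, ⟨hyA, hfmem y⟩, hinj.leftInvOn_invFunOn hyL⟩
      calc μH[(d:ℝ)] (f ⁻¹' A ∩ (L₁ : Set (EuclideanSpace ℝ (Fin n))))
          ≤ μH[(d:ℝ)] (σ '' (A ∩ (L₂ : Set (EuclideanSpace ℝ (Fin n))))) := measure_mono hsub
        _ ≤ (k : ℝ≥0∞)^(d:ℝ) * μH[(d:ℝ)] (A ∩ (L₂ : Set (EuclideanSpace ℝ (Fin n)))) :=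
            (hσlip.mono inter_subset_right).hausdorffMeasure_image_le (by positivity)
    -- geometry of regions
    have hmove : ∀ y ∈ (L₁ : Set (EuclideanSpace ℝ (Fin n))), ‖y - f y‖ ≤ δ + ε * ‖y - p₁‖ := by
      intro y hy
      have hyW : y - p₁ ∈ W₁ := by
        simpa [vsub_eq_sub] using
          AffineSubspace.vsub_mem_direction (SetLike.mem_coe.1 hy) hp₁L
      have e : y - f y = (p₁ - f p₁) + ((y - p₁) - ((P (y - p₁)) : EuclideanSpace ℝ (Fin n))) := by
        have e1 : f y - f p₁ = ((P (y - p₁)) : EuclideanSpace ℝ (Fin n)) := hfsub y p₁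
        rw [← e1]; abel
      rw [e]
      calc ‖(p₁ - f p₁) + ((y - p₁) - ((P (y - p₁)) : EuclideanSpace ℝ (Fin n)))‖
          ≤ ‖p₁ - f p₁‖ + ‖(y - p₁) - ((P (y - p₁)) : EuclideanSpace ℝ (Fin n))‖ := norm_add_le _ _
        _ ≤ δ + ε * ‖y - p₁‖ := by
            refine add_le_add (hd1 p₁ ⟨hp₁L', hp₁r⟩) ?_
            rw [norm_sub_rev]
            exact hdir _ hyW
    have hpre : ∀ y ∈ (L₁ : Set (EuclideanSpace ℝ (Fin n))), f y ∈ ball x r →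
        y ∈ ball x (4*r) := by
      intro y hy hfy
      have h1 := hmove y hy
      have h2 : ‖y - p₁‖ ≤ ‖y - f y‖ + ‖f y - x‖ + ‖x - p₁‖ := by
        have e : y - p₁ = (y - f y) + (f y - x) + (x - p₁) := by abel
        rw [e]
        exact norm_add₃_le
      have h3 : ‖f y - x‖ < r := by rw [← dist_eq_norm]; exact mem_ball.1 hfy
      have h4 : ‖x - p₁‖ < r/2 := by
        rw [← dist_eq_norm, dist_comm]; exact mem_ball.1 hp₁B
      have h5 : ‖y - p₁‖ ≤ 13*r/4 := by nlinarith [norm_nonneg (y - p₁)]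
      rw [mem_ball, dist_eq_norm]
      have e2 : y - x = (y - p₁) + (p₁ - x) := by abel
      have h6 : ‖p₁ - x‖ < r/2 := by rw [← dist_eq_norm]; exact mem_ball.1 hp₁B
      calc ‖y - x‖ ≤ ‖y - p₁‖ + ‖p₁ - x‖ := by rw [e2]; exact norm_add_le _ _
        _ < 4*r := by linarith
    have hmove4 : ∀ y ∈ (L₁ : Set (EuclideanSpace ℝ (Fin n))), y ∈ ball x (4*r) →
        ‖y - f y‖ ≤ 19*δ := by
      intro y hy hyb
      have h1 := hmove y hy
      have h2 : ‖y - p₁‖ ≤ ‖y - x‖ + ‖x - p₁‖ := by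
        have e : y - p₁ = (y - x) + (x - p₁) := by abel
        rw [e]; exact norm_add_le _ _
      have h3 : ‖y - x‖ < 4*r := by rw [← dist_eq_norm]; exact mem_ball.1 hyb
      have h4 : ‖x - p₁‖ < r/2 := by rw [← dist_eq_norm, dist_comm]; exact mem_ball.1 hp₁B
      have h5 : ‖y - p₁‖ ≤ 9*r/2 := by linarith
      have h6 : ε * ‖y - p₁‖ ≤ 18*δ := by
        have h7 : ε * ‖y - p₁‖ ≤ ε * (9*r/2) := mul_le_mul_of_nonneg_left h5 hε0
        have h8 : ε * (9*r/2) = 18*δ := by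
          rw [hεdef]; field_simp; ring
        linarith
      linarith
    -- step 1 : compare ∫ φ∘f and ∫ φ over μ₁
    have hsub₁4 : (L₁ : Set (EuclideanSpace ℝ (Fin n))) ∩ ball x (4*r) ⊆ closedBall p₁ (5*r) := by
      rintro y ⟨_, hy⟩
      rw [mem_closedBall]
      have h1 : dist y x < 4*r := mem_ball.1 hy
      have h2 : dist p₁ x < r/2 := mem_ball.1 hp₁B
      calc dist y p₁ ≤ dist y x + dist x p₁ := dist_triangle _ _ _
        _ ≤ 5*r := by rw [dist_comm x p₁]; linarith
    have hμ₁ball4 := restrict_le_real L₁ hd₁ hp₁L (by positivity : (0:ℝ) ≤ 5*r)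
      measurableSet_ball hsub₁4
    have hμ₁ne4 := restrict_ne_top L₁ hd₁ hp₁L (by positivity : (0:ℝ) ≤ 5*r)
      measurableSet_ball hsub₁4
    have hsubpre : (L₁ : Set (EuclideanSpace ℝ (Fin n))) ∩ f ⁻¹' (ball x r) ⊆
        closedBall p₁ (5*r) := by
      rintro y ⟨hyL, hyf⟩
      exact hsub₁4 ⟨hyL, hpre y hyL hyf⟩
    have hμ₁nepre := restrict_ne_top L₁ hd₁ hp₁L (by positivity : (0:ℝ) ≤ 5*r)
      (hfcont.measurable measurableSet_ball) hsubpre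
    -- integrability of φ ∘ f
    have hφfb : ∀ y, |φ (f y)| ≤ (f ⁻¹' (ball x r)).indicator (fun _ => r) y := by
      intro y
      by_cases hy : y ∈ f ⁻¹' (ball x r)
      · rw [indicator_of_mem hy]; exact phi_le hn hr hφ hsupp (f y)
      · rw [indicator_of_notMem hy, hφzero _ hy]; simp
    have hφfmeas : AEStronglyMeasurable (fun y => φ (f y)) μ₁ :=
      (hφcont.comp hfcont).aestronglyMeasurable
    obtain ⟨hφfint, -⟩ := int_helper μ₁ (ψ := fun y => φ (f y)) hφfmeas
      (hfcont.measurable measurableSet_ball) hμ₁nepre (ae_of_all _ hφfb)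
    -- pointwise bound on difference
    have hptw : ∀ᵐ y ∂μ₁, |φ (f y) - φ y| ≤ (ball x (4*r)).indicator (fun _ => 19*δ) y := by
      rw [hμ₁def]
      refine (ae_restrict_iff' hL₁m).2 (ae_of_all _ fun y hyL => ?_)
      by_cases hyb : y ∈ ball x (4*r)
      · rw [indicator_of_mem hyb]
        have h := hφ.dist_le_mul (f y) y
        rw [Real.dist_eq, NNReal.coe_one, one_mul, dist_eq_norm] at h
        calc |φ (f y) - φ y| ≤ ‖f y - y‖ := h
          _ = ‖y - f y‖ := norm_sub_rev _ _
          _ ≤ 19*δ := hmove4 y hyL hyb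
      · rw [indicator_of_notMem hyb]
        have hy1 : y ∉ ball x r := fun h => hyb (ball_subset_ball (by linarith) h)
        have hfy1 : f y ∉ ball x r := fun h => hyb (hpre y hyL h)
        rw [hφzero _ hy1, hφzero _ hfy1]
        simp
    have hψmeas : AEStronglyMeasurable (fun y => φ (f y) - φ y) μ₁ :=
      ((hφcont.comp hfcont).sub hφcont).aestronglyMeasurable
    obtain ⟨-, hstep1⟩ := int_helper μ₁ (ψ := fun y => φ (f y) - φ y) hψmeas
      measurableSet_ball hμ₁ne4 hptw
    have hstep1' : |(∫ y, φ (f y) ∂μ₁) - ∫ y, φ y ∂μ₁| ≤ 19*δ * (μ₁ (ball x (4*r))).toReal := by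
      rw [← integral_sub hφfint hφint₁]
      exact hstep1
    -- step 2 : pushforward
    have hstep2 : ∫ y, φ y ∂ν = ∫ y, φ (f y) ∂μ₁ := by
      rw [hνdef, integral_map hfmeas.aemeasurable hφcont.aestronglyMeasurable]
    -- step 3 : compare ∫ φ over ν and μ₂
    have hμ₂K : μ₂ (ball x r) ≠ ⊤ := hμ₂ne
    have hνK : ν (ball x r) ≠ ⊤ := by
      rw [hν_apply _ measurableSet_ball]
      have hb : μH[(d:ℝ)] (f ⁻¹' ball x r ∩ (L₁ : Set (EuclideanSpace ℝ (Fin n)))) ≤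
          planeConst d * ENNReal.ofReal ((5*r)^d) := by
        refine le_trans (measure_mono ?_)
          (plane_bound n d L₁ hd₁ hp₁L (by positivity : (0:ℝ) ≤ 5*r))
        exact fun y hy => ⟨hy.2, hsubpre ⟨hy.2, hy.1⟩⟩
      exact ne_top_of_le_ne_top
        (ENNReal.mul_ne_top (planeConst_ne_top d) ENNReal.ofReal_ne_top) hb
    haveI hfin₂ : IsFiniteMeasure (μ₂.restrict (ball x r)) :=
      ⟨by rw [Measure.restrict_apply_univ]; exact lt_top_iff_ne_top.2 hμ₂K⟩
    haveI hfinν : IsFiniteMeasure (ν.restrict (ball x r)) :=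
      ⟨by rw [Measure.restrict_apply_univ]; exact lt_top_iff_ne_top.2 hνK⟩
    have hle' : μ₂.restrict (ball x r) ≤ ν.restrict (ball x r) :=
      Measure.restrict_mono subset_rfl hμ₂_le_ν
    set ρ := ν.restrict (ball x r) - μ₂.restrict (ball x r) with hρdef
    haveI : IsFiniteMeasure ρ := isFiniteMeasure_of_le _ Measure.sub_le
    have hcs : HasCompactSupport φ :=
      HasCompactSupport.intro (isCompact_closedBall x r)
        fun y hy => hφzero y fun h => hy (ball_subset_closedBall h)
    have hintρ : Integrable φ ρ := hφcont.integrable_of_hasCompactSupport hcs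
    have hintμ₂K : Integrable φ (μ₂.restrict (ball x r)) :=
      hφcont.integrable_of_hasCompactSupport hcs
    have hsplit : ∫ y, φ y ∂(ν.restrict (ball x r)) =
        (∫ y, φ y ∂ρ) + ∫ y, φ y ∂(μ₂.restrict (ball x r)) := by
      conv_lhs => rw [← Measure.sub_add_cancel_of_le hle']
      exact integral_add_measure hintρ hintμ₂K
    have hresν : ∫ y, φ y ∂(ν.restrict (ball x r)) = ∫ y, φ y ∂ν :=
      setIntegral_eq_integral_of_forall_compl_eq_zero fun y hy => hφzero y hy
    have hres₂ : ∫ y, φ y ∂(μ₂.restrict (ball x r)) = ∫ y, φ y ∂μ₂ :=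
      setIntegral_eq_integral_of_forall_compl_eq_zero fun y hy => hφzero y hy
    have hρb : |∫ y, φ y ∂ρ| ≤ r * (ρ univ).toReal := by
      have h := norm_integral_le_of_norm_le_const (μ := ρ) (f := φ) (C := r)
        (ae_of_all _ fun y => by rw [Real.norm_eq_abs]; exact hφr y)
      rwa [Real.norm_eq_abs] at h
    have hcval : ((k : ℝ≥0∞)^(d:ℝ)).toReal = ((1-ε)^d)⁻¹ := by
      rw [← ENNReal.coe_rpow_of_nonneg _ (by positivity : (0:ℝ) ≤ (d:ℝ)), ENNReal.coe_toReal,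
        NNReal.coe_rpow, hk_coe, Real.rpow_natCast, inv_pow]
    have hρuniv : (ρ univ).toReal ≤ (((1-ε)^d)⁻¹ - 1) * (μ₂ (ball x r)).toReal := by
      rw [hρdef, Measure.sub_apply MeasurableSet.univ hle', Measure.restrict_apply_univ,
        Measure.restrict_apply_univ]
      have h1 : ν (ball x r) ≤ ((k : ℝ≥0∞)^(d:ℝ)) * μ₂ (ball x r) := by
        have h := Measure.le_iff'.1 hν_le (ball x r)
        rwa [Measure.smul_apply, smul_eq_mul] at h
      have h2 : (ν (ball x r) - μ₂ (ball x r)).toReal =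
          (ν (ball x r)).toReal - (μ₂ (ball x r)).toReal :=
        ENNReal.toReal_sub_of_le (Measure.le_iff'.1 hμ₂_le_ν (ball x r)) hνK
      rw [h2]
      have h3 : (ν (ball x r)).toReal ≤ ((1-ε)^d)⁻¹ * (μ₂ (ball x r)).toReal := by
        have h4 := ENNReal.toReal_mono
          (ENNReal.mul_ne_top (by
            rw [← ENNReal.coe_rpow_of_nonneg _ (by positivity : (0:ℝ) ≤ (d:ℝ))]
            exact ENNReal.coe_ne_top) hμ₂K) h1
        rwa [ENNReal.toReal_mul, hcval] at h4
      linarith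
    have hstep3 : |(∫ y, φ y ∂ν) - ∫ y, φ y ∂μ₂| ≤
        r * ((((1-ε)^d)⁻¹ - 1) * (μ₂ (ball x r)).toReal) := by
      have e : (∫ y, φ y ∂ν) - ∫ y, φ y ∂μ₂ = ∫ y, φ y ∂ρ := by
        rw [← hresν, ← hres₂, hsplit]; ring
      rw [e]
      exact hρb.trans (mul_le_mul_of_nonneg_left hρuniv hr.le)
    -- final arithmetic
    have hεb := eps_ineq d hε0 hε2
    have hμ₁ball4' : (μ₁ (ball x (4*r))).toReal ≤ Λ * (5*r)^d := hμ₁ball4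
    have hμ₂ball' : (μ₂ (ball x r)).toReal ≤ Λ * (2*r)^d := hμ₂ball
    clear_value Λ δ ε k
    have hfinal1 : |(∫ y, φ y ∂μ₁) - ∫ y, φ y ∂μ₂| ≤
        19*δ * (μ₁ (ball x (4*r))).toReal +
          r * ((((1-ε)^d)⁻¹ - 1) * (μ₂ (ball x r)).toReal) := by
      have e : (∫ y, φ y ∂μ₁) - ∫ y, φ y ∂μ₂ =
          -((∫ y, φ (f y) ∂μ₁) - ∫ y, φ y ∂μ₁) + ((∫ y, φ y ∂ν) - ∫ y, φ y ∂μ₂) := by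
        rw [hstep2]; ring
      rw [e]
      refine (abs_add_le _ _).trans ?_
      rw [abs_neg]
      exact add_le_add hstep1' hstep3
    have hterm1 : 19*δ * (μ₁ (ball x (4*r))).toReal ≤ 19*δ * (Λ * (5*r)^d) :=
      mul_le_mul_of_nonneg_left hμ₁ball4' (by positivity)
    have hterm2 : r * ((((1-ε)^d)⁻¹ - 1) * (μ₂ (ball x r)).toReal) ≤ 4*d*4^d*Λ*δ*r^d := by
      have hm2 : (μ₂ (ball x r)).toReal ≤ Λ * (2^d * r^d) := by
        rw [← mul_pow]; exact hμ₂ball'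
      have hm2' : (0:ℝ) ≤ (μ₂ (ball x r)).toReal := ENNReal.toReal_nonneg
      have h1 : (((1-ε)^d)⁻¹ - 1) * (μ₂ (ball x r)).toReal ≤
          ((d:ℝ)*2^d*ε) * (Λ * (2^d*r^d)) :=
        mul_le_mul hεb hm2 hm2' (by positivity)
      have h2 := mul_le_mul_of_nonneg_left h1 hr.le
      refine h2.trans (le_of_eq ?_)
      have e4 : (4:ℝ)^d = 2^d * 2^d := by
        rw [show (4:ℝ) = 2*2 by norm_num, mul_pow]
      rw [hεdef, e4]
      field_simp
    have hfinal2 : 19*δ * (Λ * (5*r)^d) + 4*d*4^d*Λ*δ*r^d ≤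
        ((19 * 5^d + 4*d*4^d + 16*2^d) * Λ + 1) * δ * r^d := by
      rw [mul_pow]
      have h1 : (0:ℝ) ≤ Λ*(δ*r^d) := mul_nonneg hΛ0 (mul_nonneg hδ0 hrd)
      have h2 : (0:ℝ) ≤ δ*r^d := mul_nonneg hδ0 hrd
      have hrest : (0:ℝ) ≤ 16*2^d*(Λ*(δ*r^d)) + δ*r^d :=
        add_nonneg (mul_nonneg (by positivity) h1) h2
      linarith [hrest]
    calc |(∫ y, φ y ∂μ₁) - ∫ y, φ y ∂μ₂|
        ≤ 19*δ * (μ₁ (ball x (4*r))).toReal +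
            r * ((((1-ε)^d)⁻¹ - 1) * (μ₂ (ball x r)).toReal) := hfinal1
      _ ≤ 19*δ * (Λ * (5*r)^d) + 4*d*4^d*Λ*δ*r^d := add_le_add hterm1 hterm2
      _ ≤ _ := hfinal2

/-- for affine `d`-planes `L₁, L₂` meeting `0.5B`,
`r^{-d} F_B(ℋ^d|_{L₁}, ℋ^d|_{L₂}) ≤ C dist_H(L₁ ∩ B, L₂ ∩ B)`, `C = C(n,d)`. -/
theorem Fdist_le_hausdorffDist (n d : ℕ) :
    ∃ C : ℝ, 0 < C ∧
      ∀ (x : EuclideanSpace ℝ (Fin n)) (r : ℝ), 0 < r →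
      ∀ (L₁ L₂ : AffineSubspace ℝ (EuclideanSpace ℝ (Fin n))),
        Module.finrank ℝ L₁.direction = d → Module.finrank ℝ L₂.direction = d →
        ((L₁ : Set (EuclideanSpace ℝ (Fin n))) ∩ ball x (r / 2)).Nonempty →
        ((L₂ : Set (EuclideanSpace ℝ (Fin n))) ∩ ball x (r / 2)).Nonempty →
        (1 / r ^ d) * Fdist (ball x r)
            (μH[(d : ℝ)].restrict (L₁ : Set (EuclideanSpace ℝ (Fin n))))
            (μH[(d : ℝ)].restrict (L₂ : Set (EuclideanSpace ℝ (Fin n))))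
            (fun _ => 1) (fun _ => 1) ≤
          C * hausdorffDist ((L₁ : Set (EuclideanSpace ℝ (Fin n))) ∩ ball x r)
            ((L₂ : Set (EuclideanSpace ℝ (Fin n))) ∩ ball x r) := by
  by_cases hn : n = 0
  · subst hn
    haveI hsing : Subsingleton (EuclideanSpace ℝ (Fin 0)) :=
      ⟨fun a b => (WithLp.ext_iff 2).2 (funext fun i => i.elim0)⟩
    refine ⟨1, one_pos, ?_⟩
    intro x r hr L₁ L₂ hd₁ hd₂ h₁ h₂
    obtain ⟨p₁, hp₁, -⟩ := h₁
    obtain ⟨p₂, hp₂, -⟩ := h₂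
    have hsets : (L₁ : Set (EuclideanSpace ℝ (Fin 0))) = (L₂ : Set (EuclideanSpace ℝ (Fin 0))) := by
      ext z
      constructor
      · intro _; exact (Subsingleton.elim p₂ z) ▸ hp₂
      · intro _; exact (Subsingleton.elim p₁ z) ▸ hp₁
    have hFd : Fdist (ball x r)
        (μH[(d : ℝ)].restrict (L₁ : Set (EuclideanSpace ℝ (Fin 0))))
        (μH[(d : ℝ)].restrict (L₂ : Set (EuclideanSpace ℝ (Fin 0))))
        (fun _ => 1) (fun _ => 1) = 0 := by
      refine le_antisymm (Real.iSup_le (fun φ => ?_) le_rfl)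
        (Real.iSup_nonneg fun φ => abs_nonneg _)
      rw [hsets, sub_self, abs_zero]
    rw [hFd, mul_zero, one_mul]
    exact hausdorffDist_nonneg
  · obtain hC0 : (0:ℝ) ≤ (19 * 5^d + 4*d*4^d + 16*2^d) * (planeConst d).toReal :=
      mul_nonneg (by positivity) ENNReal.toReal_nonneg
    refine ⟨(19 * 5^d + 4*d*4^d + 16*2^d) * (planeConst d).toReal + 1, by linarith, ?_⟩
    intro x r hr L₁ L₂ hd₁ hd₂ h₁ h₂
    have hkey := key n d hn x r hr L₁ L₂ hd₁ hd₂ h₁ h₂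
    have hδ0 : 0 ≤ hausdorffDist ((L₁ : Set (EuclideanSpace ℝ (Fin n))) ∩ ball x r)
        ((L₂ : Set (EuclideanSpace ℝ (Fin n))) ∩ ball x r) := hausdorffDist_nonneg
    have hF : Fdist (ball x r)
        (μH[(d : ℝ)].restrict (L₁ : Set (EuclideanSpace ℝ (Fin n))))
        (μH[(d : ℝ)].restrict (L₂ : Set (EuclideanSpace ℝ (Fin n))))
        (fun _ => 1) (fun _ => 1) ≤
        ((19 * 5^d + 4*d*4^d + 16*2^d) * (planeConst d).toReal + 1) *
          hausdorffDist ((L₁ : Set (EuclideanSpace ℝ (Fin n))) ∩ ball x r)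
            ((L₂ : Set (EuclideanSpace ℝ (Fin n))) ∩ ball x r) * r ^ d := by
      refine Real.iSup_le (fun φ => ?_) ?_
      · simp only [mul_one]
        exact hkey φ.1 φ.2.1 φ.2.2
      · exact mul_nonneg (mul_nonneg (by linarith) hδ0) (by positivity)
    rw [one_div, inv_mul_le_iff₀ (by positivity : (0:ℝ) < r ^ d)]
    exact hF.trans (le_of_eq (by ring))
end

section
/- Let $\sigma$ be a $d$-Ahlfors regular measure on $\mathbb{R}^n$ and let $s_r(x,y) = \phi_r(x-y)/(\phi_r*\sigma(x))$ with $\phi_r$ as above. Then for $x, x', y \in \operatorname{supp}\sigma$: $|s_r(x,y) - s_r(x',y)| \le C\,|x-x'|\,r^{-d-1}$, with $C$ depending only on the Ahlfors regularity constant, $d$, and $\phi$. -/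
open MeasureTheory Metric Set

noncomputable def alphaNum (n d : ℕ) (μ : Measure (EuclideanSpace ℝ (Fin n)))
    (f : EuclideanSpace ℝ (Fin n) → ℝ) (x : EuclideanSpace ℝ (Fin n)) (r : ℝ) : ℝ :=
  (1 / r ^ (d + 1)) *
    ⨅ p : ℝ × {L : AffineSubspace ℝ (EuclideanSpace ℝ (Fin n)) //
        Module.finrank ℝ L.direction = d},
      Fdist (ball x r) μ (μH[(d : ℝ)].restrict (p.2.1 : Set (EuclideanSpace ℝ (Fin n))))
        f (fun _ => p.1)

/-- The support of a measure: points all of whose neighbourhoods have positive measure. -/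
def msupport {n : ℕ} (μ : Measure (EuclideanSpace ℝ (Fin n))) : Set (EuclideanSpace ℝ (Fin n)) :=
  {x | ∀ r : ℝ, 0 < r → 0 < μ (ball x r)}

/-- `μ` is `d`-Ahlfors regular with constant `A`. -/
def AhlforsRegular (n d : ℕ) (A : ℝ) (μ : Measure (EuclideanSpace ℝ (Fin n))) : Prop :=
  ∀ x ∈ msupport μ, ∀ s : ℝ, 0 < s → ENNReal.ofReal s < EMetric.diam (msupport μ) →
    ENNReal.ofReal (A⁻¹ * s ^ d) ≤ μ (ball x s) ∧ μ (ball x s) ≤ ENNReal.ofReal (A * s ^ d)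

/-- The convolution `φ_r * σ` where `φ_r(y) = r^{-d} φ(y/r)`. -/
noncomputable def phiConv {n : ℕ} (d : ℕ) (σ : Measure (EuclideanSpace ℝ (Fin n)))
    (φ : EuclideanSpace ℝ (Fin n) → ℝ) (r : ℝ) (x : EuclideanSpace ℝ (Fin n)) : ℝ :=
  ∫ y, r ^ (-(d : ℝ)) * φ (r⁻¹ • (x - y)) ∂σ

/-- The kernel `s_r(x,y) = φ_r(x-y) / (φ_r*σ)(x)`. -/
noncomputable def sKer {n : ℕ} (d : ℕ) (σ : Measure (EuclideanSpace ℝ (Fin n)))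
    (φ : EuclideanSpace ℝ (Fin n) → ℝ) (r : ℝ) (x y : EuclideanSpace ℝ (Fin n)) : ℝ :=
  r ^ (-(d : ℝ)) * φ (r⁻¹ • (x - y)) / phiConv d σ φ r x

/-- Lipschitz estimate for the kernel `s_r` in the first variable:
`|s_r(x,y) - s_r(x',y)| ≤ C |x-x'| r^{-d-1}` for `x, x', y ∈ supp σ`. -/
theorem sKer_lipschitz (n d : ℕ) (A c₀ Mφ : ℝ) (hA : 0 < A) (hc₀ : 0 < c₀) (hMφ : 0 < Mφ) :
    ∃ C : ℝ, 0 < C ∧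
      ∀ (σ : Measure (EuclideanSpace ℝ (Fin n))) (φ : EuclideanSpace ℝ (Fin n) → ℝ),
        AhlforsRegular n d A σ →
        LipschitzWith 1 φ → (∀ y, 0 ≤ φ y) →
        Function.support φ ⊆ ball (0 : EuclideanSpace ℝ (Fin n)) 1 →
        (∀ y ∈ ball (0 : EuclideanSpace ℝ (Fin n)) (1 / 2), c₀ ≤ φ y) →
        (∀ y, φ y ≤ Mφ) →
        ∀ r : ℝ, 0 < r → ENNReal.ofReal r < EMetric.diam (msupport σ) →
          ∀ x ∈ msupport σ, ∀ x' ∈ msupport σ, ∀ y ∈ msupport σ,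
            |sKer d σ φ r x y - sKer d σ φ r x' y| ≤ C * dist x x' * r ^ (-(d : ℝ) - 1) := by
  classical
  have h2d : (0:ℝ) < 2 ^ d := by positivity
  set cl : ℝ := c₀ / (A * 2 ^ d) with hcl_def
  have hcl : 0 < cl := by positivity
  refine ⟨cl⁻¹ + 2 * A * Mφ / cl ^ 2, by positivity, ?_⟩
  intro σ φ hreg hLip hφ0 hsupp hφc hφM r hr hrdiam x hx x' hx' y hy
  have hrd : (0:ℝ) < r ^ d := pow_pos hr d
  have hrpow : r ^ (-(d:ℝ)) = (r ^ d)⁻¹ := by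
    rw [← Real.rpow_natCast r d, ← Real.rpow_neg hr.le]
  set g : EuclideanSpace ℝ (Fin n) → EuclideanSpace ℝ (Fin n) → ℝ :=
    fun z w => r ^ (-(d : ℝ)) * φ (r⁻¹ • (z - w)) with hg_def
  have hg_supp : ∀ z w, w ∉ ball z r → g z w = 0 := by
    intro z w hw
    have hφ : φ (r⁻¹ • (z - w)) = 0 := by
      by_contra h
      have hmem := hsupp (Function.mem_support.2 h)
      rw [mem_ball_zero_iff, norm_smul, norm_inv, Real.norm_eq_abs, abs_of_pos hr] at hmem
      apply hw
      rw [mem_ball, dist_eq_norm, norm_sub_rev]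
      have h3 := mul_lt_mul_of_pos_left hmem hr
      rwa [← mul_assoc, mul_inv_cancel₀ hr.ne', one_mul, mul_one] at h3
    simp [hg_def, hφ]
  have hg_nonneg : ∀ z w, 0 ≤ g z w := by
    intro z w
    have h0 : (0:ℝ) ≤ r ^ (-(d:ℝ)) := by rw [hrpow]; positivity
    exact mul_nonneg h0 (hφ0 _)
  have hg_bdd : ∀ z w, g z w ≤ Mφ * (r ^ d)⁻¹ := by
    intro z w
    simp only [hg_def, hrpow]
    calc (r ^ d)⁻¹ * φ (r⁻¹ • (z - w)) ≤ (r ^ d)⁻¹ * Mφ :=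
          mul_le_mul_of_nonneg_left (hφM _) (by positivity)
      _ = Mφ * (r ^ d)⁻¹ := mul_comm _ _
  have hball_fin : ∀ z ∈ msupport σ, σ (ball z r) ≤ ENNReal.ofReal (A * r ^ d) :=
    fun z hz => (hreg z hz r hr hrdiam).2
  have hball_lt : ∀ z ∈ msupport σ, σ (ball z r) < ⊤ :=
    fun z hz => lt_of_le_of_lt (hball_fin z hz) ENNReal.ofReal_lt_top
  have hg_cont : ∀ z, Continuous (g z) := by
    intro z
    exact continuous_const.mul
      (hLip.continuous.comp (by fun_prop : Continuous fun w => r⁻¹ • (z - w)))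
  have hind_int : ∀ (z : EuclideanSpace ℝ (Fin n)) (s : ℝ) (c : ℝ), σ (ball z s) < ⊤ →
      Integrable ((ball z s).indicator fun _ => c) σ := by
    intro z s c hfin
    rw [integrable_indicator_iff measurableSet_ball]
    exact integrableOn_const hfin.ne
  have hint : ∀ z ∈ msupport σ, Integrable (g z) σ := by
    intro z hz
    refine Integrable.mono' (hind_int z r (Mφ * (r^d)⁻¹) (hball_lt z hz))
      ((hg_cont z).aestronglyMeasurable) (ae_of_all _ fun w => ?_)
    rw [Real.norm_eq_abs, abs_of_nonneg (hg_nonneg z w)]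
    by_cases hw : w ∈ ball z r
    · rw [indicator_of_mem hw]; exact hg_bdd z w
    · rw [indicator_of_notMem hw, hg_supp z w hw]
  have hphi_eq : ∀ z, phiConv d σ φ r z = ∫ w, g z w ∂σ := fun z => rfl
  -- lower bound for the denominator
  have hD_lb : ∀ z ∈ msupport σ, cl ≤ phiConv d σ φ r z := by
    intro z hz
    have hr2 : (0:ℝ) < r / 2 := by linarith
    have hdiam2 : ENNReal.ofReal (r/2) < EMetric.diam (msupport σ) :=
      lt_of_le_of_lt (ENNReal.ofReal_le_ofReal (by linarith)) hrdiam
    have hmeas := (hreg z hz (r/2) hr2 hdiam2).1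
    have hfin : σ (ball z (r/2)) < ⊤ :=
      lt_of_le_of_lt (measure_mono (ball_subset_ball (by linarith))) (hball_lt z hz)
    have htoReal : A⁻¹ * (r/2) ^ d ≤ (σ (ball z (r/2))).toReal :=
      (ENNReal.ofReal_le_iff_le_toReal hfin.ne).1 hmeas
    have hmono : ∫ w, (ball z (r/2)).indicator (fun _ => c₀ * (r^d)⁻¹) w ∂σ
        ≤ ∫ w, g z w ∂σ := by
      apply integral_mono (hind_int z (r/2) _ hfin) (hint z hz)
      intro w
      by_cases hw : w ∈ ball z (r/2)
      · rw [indicator_of_mem hw]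
        have hφge : c₀ ≤ φ (r⁻¹ • (z - w)) := by
          apply hφc
          rw [mem_ball_zero_iff, norm_smul, norm_inv, Real.norm_eq_abs, abs_of_pos hr]
          rw [mem_ball, dist_eq_norm] at hw
          rw [norm_sub_rev]
          have h1 : r⁻¹ * ‖w - z‖ < r⁻¹ * (r/2) :=
            mul_lt_mul_of_pos_left hw (inv_pos.2 hr)
          have h2 : r⁻¹ * (r/2) = 1/2 := by field_simp
          linarith
        simp only [hg_def, hrpow]
        calc c₀ * (r^d)⁻¹ = (r^d)⁻¹ * c₀ := mul_comm _ _
          _ ≤ (r^d)⁻¹ * φ (r⁻¹ • (z - w)) :=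
              mul_le_mul_of_nonneg_left hφge (by positivity)
      · rw [indicator_of_notMem hw]; exact hg_nonneg z w
    have hind_val : ∫ w, (ball z (r/2)).indicator (fun _ => c₀ * (r^d)⁻¹) w ∂σ
        = (σ (ball z (r/2))).toReal * (c₀ * (r^d)⁻¹) := by
      rw [integral_indicator_const _ measurableSet_ball]; simp [smul_eq_mul, Measure.real]
    have hstep : cl ≤ (σ (ball z (r/2))).toReal * (c₀ * (r^d)⁻¹) := by
      calc cl = (A⁻¹ * (r/2)^d) * (c₀ * (r^d)⁻¹) := by
            rw [hcl_def, div_pow]; field_simp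
        _ ≤ _ := mul_le_mul_of_nonneg_right htoReal (by positivity)
    rw [hphi_eq]
    calc cl ≤ (σ (ball z (r/2))).toReal * (c₀ * (r^d)⁻¹) := hstep
      _ = ∫ w, (ball z (r/2)).indicator (fun _ => c₀ * (r^d)⁻¹) w ∂σ := hind_val.symm
      _ ≤ _ := hmono
  -- Lipschitz bound for the numerator
  have hnum_lip : ∀ z z' w, |g z w - g z' w| ≤ dist z z' * ((r^d)⁻¹ * r⁻¹) := by
    intro z z' w
    have h1 : g z w - g z' w = (r^d)⁻¹ * (φ (r⁻¹ • (z - w)) - φ (r⁻¹ • (z' - w))) := by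
      simp only [hg_def, hrpow]; ring
    rw [h1, abs_mul, abs_of_nonneg (by positivity : (0:ℝ) ≤ (r^d)⁻¹)]
    have h2 : |φ (r⁻¹ • (z - w)) - φ (r⁻¹ • (z' - w))| ≤ r⁻¹ * dist z z' := by
      have hd := hLip.dist_le_mul (r⁻¹ • (z - w)) (r⁻¹ • (z' - w))
      rw [Real.dist_eq] at hd
      have heq : dist (r⁻¹ • (z - w)) (r⁻¹ • (z' - w)) = r⁻¹ * dist z z' := by
        rw [dist_eq_norm, ← smul_sub, norm_smul, norm_inv, Real.norm_eq_abs, abs_of_pos hr]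
        congr 1
        rw [dist_eq_norm]
        congr 1
        abel
      calc |φ (r⁻¹ • (z - w)) - φ (r⁻¹ • (z' - w))|
          ≤ dist (r⁻¹ • (z - w)) (r⁻¹ • (z' - w)) := by simpa using hd
        _ = r⁻¹ * dist z z' := heq
    calc (r^d)⁻¹ * |φ (r⁻¹ • (z - w)) - φ (r⁻¹ • (z' - w))|
        ≤ (r^d)⁻¹ * (r⁻¹ * dist z z') := mul_le_mul_of_nonneg_left h2 (by positivity)
      _ = dist z z' * ((r^d)⁻¹ * r⁻¹) := by ring
  -- difference of denominators
  have hD_diff : |phiConv d σ φ r x - phiConv d σ φ r x'| ≤ 2 * A * dist x x' * r⁻¹ := by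
    have hU : MeasurableSet (ball x r ∪ ball x' r) :=
      measurableSet_ball.union measurableSet_ball
    have hU_fin : σ (ball x r ∪ ball x' r) < ⊤ :=
      lt_of_le_of_lt (measure_union_le _ _)
        (ENNReal.add_lt_top.2 ⟨hball_lt x hx, hball_lt x' hx'⟩)
    have hind_intU : Integrable
        ((ball x r ∪ ball x' r).indicator fun _ => dist x x' * ((r^d)⁻¹ * r⁻¹)) σ := by
      rw [integrable_indicator_iff hU]
      exact integrableOn_const hU_fin.ne
    have hint_abs : Integrable (fun w => |g x w - g x' w|) σ :=
      ((hint x hx).sub (hint x' hx')).abs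
    have hmono2 : ∫ w, |g x w - g x' w| ∂σ ≤
        ∫ w, (ball x r ∪ ball x' r).indicator (fun _ => dist x x' * ((r^d)⁻¹ * r⁻¹)) w ∂σ := by
      apply integral_mono hint_abs hind_intU
      intro w
      show |g x w - g x' w| ≤ (ball x r ∪ ball x' r).indicator
        (fun _ => dist x x' * ((r^d)⁻¹ * r⁻¹)) w
      by_cases hw : w ∈ ball x r ∪ ball x' r
      · rw [indicator_of_mem hw]; exact hnum_lip x x' w
      · rw [mem_union, not_or] at hw
        rw [indicator_of_notMem (by rw [mem_union, not_or]; exact hw),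
          hg_supp x w hw.1, hg_supp x' w hw.2]
        simp
    have hval : ∫ w, (ball x r ∪ ball x' r).indicator
          (fun _ => dist x x' * ((r^d)⁻¹ * r⁻¹)) w ∂σ
        = (σ (ball x r ∪ ball x' r)).toReal * (dist x x' * ((r^d)⁻¹ * r⁻¹)) := by
      rw [integral_indicator_const _ hU]; simp [smul_eq_mul, Measure.real]
    have hUtoReal : (σ (ball x r ∪ ball x' r)).toReal ≤ 2 * (A * r^d) := by
      apply ENNReal.toReal_le_of_le_ofReal (by positivity)
      calc σ (ball x r ∪ ball x' r) ≤ σ (ball x r) + σ (ball x' r) := measure_union_le _ _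
        _ ≤ ENNReal.ofReal (A*r^d) + ENNReal.ofReal (A*r^d) :=
            add_le_add (hball_fin x hx) (hball_fin x' hx')
        _ = ENNReal.ofReal (2*(A*r^d)) := by
            rw [← ENNReal.ofReal_add (by positivity) (by positivity)]; ring_nf
    rw [hphi_eq, hphi_eq, ← integral_sub (hint x hx) (hint x' hx')]
    calc |∫ w, (g x w - g x' w) ∂σ| ≤ ∫ w, |g x w - g x' w| ∂σ := by
          simpa [Real.norm_eq_abs] using
            norm_integral_le_integral_norm (μ := σ) (f := fun w => g x w - g x' w)
      _ ≤ (σ (ball x r ∪ ball x' r)).toReal * (dist x x' * ((r^d)⁻¹ * r⁻¹)) :=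
          hval ▸ hmono2
      _ ≤ (2 * (A * r^d)) * (dist x x' * ((r^d)⁻¹ * r⁻¹)) :=
          mul_le_mul_of_nonneg_right hUtoReal (by positivity)
      _ = 2 * A * dist x x' * r⁻¹ := by field_simp
  -- final algebra
  set Dx := phiConv d σ φ r x with hDx_def
  set Dx' := phiConv d σ φ r x' with hDx'_def
  have hDx : cl ≤ Dx := hD_lb x hx
  have hDx' : cl ≤ Dx' := hD_lb x' hx'
  have hDxpos : 0 < Dx := lt_of_lt_of_le hcl hDx
  have hDx'pos : 0 < Dx' := lt_of_lt_of_le hcl hDx'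
  set Nx := g x y with hNx_def
  set Nx' := g x' y with hNx'_def
  have hs_eq : sKer d σ φ r x y = Nx / Dx := rfl
  have hs_eq' : sKer d σ φ r x' y = Nx' / Dx' := rfl
  rw [hs_eq, hs_eq']
  have hsplit : Nx / Dx - Nx' / Dx' = (Nx - Nx') / Dx + Nx' * (Dx' - Dx) / (Dx * Dx') := by
    field_simp
    ring
  rw [hsplit]
  have hrfin : r ^ (-(d:ℝ) - 1) = (r^d)⁻¹ * r⁻¹ := by
    rw [Real.rpow_sub hr, Real.rpow_one, hrpow, div_eq_mul_inv]
  have t1 : |(Nx - Nx') / Dx| ≤ (dist x x' * ((r^d)⁻¹ * r⁻¹)) / cl := by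
    rw [abs_div, abs_of_pos hDxpos]
    exact div_le_div₀ (by positivity) (hnum_lip x x' y) hcl hDx
  have t2 : |Nx' * (Dx' - Dx) / (Dx * Dx')| ≤
      (Mφ * (r^d)⁻¹) * (2*A*dist x x' * r⁻¹) / (cl * cl) := by
    rw [abs_div, abs_mul, abs_of_pos (mul_pos hDxpos hDx'pos)]
    apply div_le_div₀ (by positivity) ?_ (by positivity)
      (mul_le_mul hDx hDx' hcl.le hDxpos.le)
    apply mul_le_mul ?_ ?_ (abs_nonneg _) (by positivity)
    · rw [abs_of_nonneg (hg_nonneg x' y)]; exact hg_bdd x' y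
    · rw [abs_sub_comm]; exact hD_diff
  calc |(Nx - Nx') / Dx + Nx' * (Dx' - Dx) / (Dx * Dx')|
      ≤ |(Nx - Nx') / Dx| + |Nx' * (Dx' - Dx) / (Dx * Dx')| := abs_add_le _ _
    _ ≤ (dist x x' * ((r^d)⁻¹ * r⁻¹)) / cl
        + (Mφ * (r^d)⁻¹) * (2*A*dist x x' * r⁻¹) / (cl * cl) := add_le_add t1 t2
    _ = (cl⁻¹ + 2 * A * Mφ / cl ^ 2) * dist x x' * r ^ (-(d:ℝ) - 1) := by
        rw [hrfin]; field_simp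
end

section
/- Let $\sigma$ be $d$-Ahlfors regular, and let $\tilde{s}_r(x,y) = \int s_r(x,z)\,\frac{1}{S_r^*1(z)}\,s_r(y,z)\,d\sigma(z)$ with $s_r$ as above. Then for $x \in \operatorname{supp}\sigma$, $\tilde{s}_r(x,\cdot)$ is supported in $B(x, 2r)$, and for $x, x', y \in \operatorname{supp}\sigma$, $|\tilde{s}_r(x,y) - \tilde{s}_r(x',y)| \le C\,|x-x'|\,r^{-d-1}$. -/
open MeasureTheory Metric Set

/-- The kernel `s̃_r(x,y) = ∫ s_r(x,z) (S_r^*1(z))⁻¹ s_r(y,z) dσ(z)`. -/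
noncomputable def sTildeKer {n : ℕ} (d : ℕ) (σ : Measure (EuclideanSpace ℝ (Fin n)))
    (φ : EuclideanSpace ℝ (Fin n) → ℝ) (r : ℝ) (x y : EuclideanSpace ℝ (Fin n)) : ℝ :=
  ∫ z, sKer d σ φ r x z * (∫ x', sKer d σ φ r x' z ∂σ)⁻¹ * sKer d σ φ r y z ∂σ

variable {n : ℕ}

lemma isClosed_msupport (σ : Measure (EuclideanSpace ℝ (Fin n))) : IsClosed (msupport σ) := by
  rw [← isOpen_compl_iff, Metric.isOpen_iff]
  intro x hx
  simp only [msupport, mem_compl_iff, mem_setOf_eq, not_forall] at hx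
  obtain ⟨ρ, hρ, h0⟩ := hx
  push_neg at h0
  refine ⟨ρ / 2, by linarith, fun y hy => ?_⟩
  simp only [msupport, mem_compl_iff, mem_setOf_eq, not_forall]
  refine ⟨ρ / 2, by linarith, ?_⟩
  push_neg
  have : ball y (ρ / 2) ⊆ ball x ρ := by
    intro w hw
    have := mem_ball.1 hw
    have := mem_ball.1 hy
    exact mem_ball.2 (by calc dist w x ≤ dist w y + dist y x := dist_triangle _ _ _
      _ < ρ := by linarith)
  exact le_trans (measure_mono this) h0

lemma measure_msupport_compl (σ : Measure (EuclideanSpace ℝ (Fin n))) :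
    σ (msupport σ)ᶜ = 0 := by
  apply measure_null_of_locally_null
  intro x hx
  simp only [msupport, mem_compl_iff, mem_setOf_eq, not_forall] at hx
  obtain ⟨ρ, hρ, h0⟩ := hx
  push_neg at h0
  exact ⟨ball x ρ, mem_nhdsWithin_of_mem_nhds (ball_mem_nhds x hρ),
    le_antisymm h0 zero_le⟩

lemma measure_ball_lt_top {d : ℕ} {A : ℝ} {σ : Measure (EuclideanSpace ℝ (Fin n))}
    (hreg : AhlforsRegular n d A σ) {r : ℝ} (hr : 0 < r)
    (hrD : ENNReal.ofReal r < EMetric.diam (msupport σ)) (x : EuclideanSpace ℝ (Fin n))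
    (ρ : ℝ) : σ (ball x ρ) < ⊤ := by
  set S := msupport σ with hS
  have hhalf : ENNReal.ofReal (r / 2) < EMetric.diam S :=
    lt_of_le_of_lt (ENNReal.ofReal_le_ofReal (by linarith)) hrD
  have hball : ∀ t ∈ S, σ (ball t (r / 2)) ≤ ENNReal.ofReal (A * (r / 2) ^ d) :=
    fun t ht => (hreg t ht (r / 2) (by linarith) hhalf).2
  set K := closure (ball x ρ ∩ S) with hK
  have hKb : Bornology.IsBounded (ball x ρ ∩ S) := isBounded_ball.subset inter_subset_left
  have hKc : IsCompact K := hKb.isCompact_closure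
  have hKS : K ⊆ S := closure_minimal inter_subset_right (isClosed_msupport σ)
  have hcover : K ⊆ ⋃ t ∈ K, ball t (r / 2) :=
    fun t ht => mem_biUnion ht (mem_ball_self (by linarith))
  obtain ⟨T, hTK, hTfin, hTcover⟩ := hKc.elim_finite_subcover_image
    (fun t _ => isOpen_ball) hcover
  have hKfin : σ K < ⊤ := by
    refine lt_of_le_of_lt (measure_mono hTcover) (measure_biUnion_lt_top hTfin ?_)
    intro t ht
    exact lt_of_le_of_lt (hball t (hKS (hTK ht))) ENNReal.ofReal_lt_top
  calc σ (ball x ρ) = σ (ball x ρ ∩ S) := (measure_inter_conull (measure_msupport_compl σ)).symm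
    _ ≤ σ K := measure_mono subset_closure
    _ < ⊤ := hKfin

lemma integrable_of_support_subset_bounded {σ : Measure (EuclideanSpace ℝ (Fin n))}
    {f : EuclideanSpace ℝ (Fin n) → ℝ} {s : Set (EuclideanSpace ℝ (Fin n))} {C : ℝ}
    (hm : AEStronglyMeasurable f σ) (hfin : σ s ≠ ⊤)
    (hsupp : Function.support f ⊆ s) (hbd : ∀ᵐ x ∂σ, ‖f x‖ ≤ C) : Integrable f σ :=
  (integrableOn_iff_integrable_of_support_subset hsupp).1
    (Measure.integrableOn_of_bounded hfin hm (ae_restrict_of_ae hbd))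

lemma abs_integral_le {σ : Measure (EuclideanSpace ℝ (Fin n))}
    {f : EuclideanSpace ℝ (Fin n) → ℝ} {s : Set (EuclideanSpace ℝ (Fin n))} {C : ℝ}
    (hs : MeasurableSet s) (hfin : σ s < ⊤)
    (hsupp : ∀ x, f x ≠ 0 → x ∈ s) (hbd : ∀ᵐ x ∂σ, x ∈ s → |f x| ≤ C) :
    |∫ x, f x ∂σ| ≤ C * (σ s).toReal := by
  rw [← setIntegral_eq_integral_of_forall_compl_eq_zero
    (fun x hx => by_contra fun h => hx (hsupp x h))]
  rw [← Real.norm_eq_abs]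
  exact norm_setIntegral_le_of_norm_le_const_ae' hfin
    (hbd.mono fun x h hxs => by rw [Real.norm_eq_abs]; exact h hxs)

set_option maxHeartbeats 1600000 in
/-- `s̃_r(x,·)` is supported in `B(x,2r)`, and satisfies the Lipschitz
estimate `|s̃_r(x,y) - s̃_r(x',y)| ≤ C |x-x'| r^{-d-1}` on the support of `σ`. -/
theorem sTildeKer_support_and_lipschitz (n d : ℕ) (A c₀ Mφ : ℝ)
    (hA : 0 < A) (hc₀ : 0 < c₀) (hMφ : 0 < Mφ) :
    ∃ C : ℝ, 0 < C ∧
      ∀ (σ : Measure (EuclideanSpace ℝ (Fin n))) (φ : EuclideanSpace ℝ (Fin n) → ℝ),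
        AhlforsRegular n d A σ →
        LipschitzWith 1 φ → (∀ y, 0 ≤ φ y) →
        Function.support φ ⊆ ball (0 : EuclideanSpace ℝ (Fin n)) 1 →
        (∀ y ∈ ball (0 : EuclideanSpace ℝ (Fin n)) (1 / 2), c₀ ≤ φ y) →
        (∀ y, φ y ≤ Mφ) →
        ∀ r : ℝ, 0 < r → ENNReal.ofReal r < EMetric.diam (msupport σ) →
          (∀ x ∈ msupport σ,
            Function.support (fun y => sTildeKer d σ φ r x y) ⊆ ball x (2 * r)) ∧
          (∀ x ∈ msupport σ, ∀ x' ∈ msupport σ, ∀ y ∈ msupport σ,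
            |sTildeKer d σ φ r x y - sTildeKer d σ φ r x' y| ≤
              C * dist x x' * r ^ (-(d : ℝ) - 1)) := by
  classical
  set m : ℝ := c₀ * A⁻¹ * (2:ℝ)⁻¹ ^ d with hm_def
  have hm : 0 < m := by positivity
  set M : ℝ := Mφ * A with hM_def
  have hM : 0 < M := by positivity
  set w₀ : ℝ := M⁻¹ * m with hw₀_def
  have hw₀ : 0 < w₀ := by positivity
  set K : ℝ := m⁻¹ + Mφ * (2 * A) * (m⁻¹ * m⁻¹) with hK_def
  have hK : 0 < K := by positivity
  refine ⟨K * w₀⁻¹ * (Mφ * m⁻¹) * A, by positivity, ?_⟩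
  intro σ φ hreg hφl hφ0 hφs hφc hφM r hr hrD
  have hrinv : (0:ℝ) < r⁻¹ := inv_pos.2 hr
  set S := msupport σ with hS_def
  have hSc : σ Sᶜ = 0 := measure_msupport_compl σ
  have haeS : ∀ᵐ x' ∂σ, x' ∈ S := by
    rw [ae_iff]
    exact hSc
  set R : ℝ := r ^ (-(d:ℝ)) with hR_def
  have hR : 0 < R := Real.rpow_pos_of_pos hr _
  have hRrd : R * r ^ d = 1 := by
    rw [hR_def, ← Real.rpow_natCast r d, ← Real.rpow_add hr]
    simp
  have hfin : ∀ (x : EuclideanSpace ℝ (Fin n)) (ρ : ℝ), σ (ball x ρ) < ⊤ :=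
    fun x ρ => measure_ball_lt_top hreg hr hrD x ρ
  set g : EuclideanSpace ℝ (Fin n) → EuclideanSpace ℝ (Fin n) → ℝ :=
    fun x y => r ^ (-(d:ℝ)) * φ (r⁻¹ • (x - y)) with hg_def
  have hsKer_eq : ∀ x y, sKer d σ φ r x y = g x y / phiConv d σ φ r x := fun _ _ => rfl
  have hconv_eq : ∀ x, phiConv d σ φ r x = ∫ y, g x y ∂σ := fun _ => rfl
  -- norm computation
  have hnorm : ∀ a b : EuclideanSpace ℝ (Fin n), ‖r⁻¹ • (a - b)‖ = r⁻¹ * dist a b := by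
    intro a b
    rw [norm_smul, Real.norm_eq_abs, abs_of_pos hrinv, dist_eq_norm]
  have hφlip : ∀ u v : EuclideanSpace ℝ (Fin n), |φ u - φ v| ≤ ‖u - v‖ := by
    intro u v
    have := hφl.dist_le_mul u v
    rwa [Real.dist_eq, dist_eq_norm, NNReal.coe_one, one_mul] at this
  -- bump facts
  have hg_supp : ∀ a b, g a b ≠ 0 → dist a b < r := by
    intro a b h
    have hφne : φ (r⁻¹ • (a - b)) ≠ 0 := by
      intro h0; apply h; rw [hg_def]; simp [h0]
    have := hφs (Function.mem_support.2 hφne)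
    rw [mem_ball_zero_iff, hnorm] at this
    calc dist a b = r * (r⁻¹ * dist a b) := by field_simp
      _ < r * 1 := by exact mul_lt_mul_of_pos_left this hr
      _ = r := mul_one r
  have hg_lower : ∀ a b, dist a b < r / 2 → R * c₀ ≤ g a b := by
    intro a b h
    have : r⁻¹ • (a - b) ∈ ball (0 : EuclideanSpace ℝ (Fin n)) (1/2) := by
      rw [mem_ball_zero_iff, hnorm]
      calc r⁻¹ * dist a b < r⁻¹ * (r / 2) := by
            exact mul_lt_mul_of_pos_left h hrinv
        _ = 1 / 2 := by field_simp
    rw [hg_def]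
    exact mul_le_mul_of_nonneg_left (hφc _ this) hR.le
  have hg_nonneg : ∀ a b, 0 ≤ g a b := fun a b => mul_nonneg hR.le (hφ0 _)
  have hg_le : ∀ a b, g a b ≤ R * Mφ := fun a b =>
    mul_le_mul_of_nonneg_left (hφM _) hR.le
  have hg_lip₁ : ∀ a a' b, |g a b - g a' b| ≤ R * (r⁻¹ * dist a a') := by
    intro a a' b
    rw [hg_def]
    simp only
    rw [← mul_sub, abs_mul, abs_of_pos hR]
    refine mul_le_mul_of_nonneg_left ?_ hR.le
    calc |φ (r⁻¹ • (a - b)) - φ (r⁻¹ • (a' - b))| ≤ ‖r⁻¹ • (a - b) - r⁻¹ • (a' - b)‖ :=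
          hφlip _ _
      _ = r⁻¹ * dist a a' := by
          rw [← smul_sub, show a - b - (a' - b) = a - a' by abel, hnorm]
  have hg_lip₂ : ∀ a b b', |g a b - g a b'| ≤ R * (r⁻¹ * dist b b') := by
    intro a b b'
    rw [hg_def]
    simp only
    rw [← mul_sub, abs_mul, abs_of_pos hR]
    refine mul_le_mul_of_nonneg_left ?_ hR.le
    calc |φ (r⁻¹ • (a - b)) - φ (r⁻¹ • (a - b'))| ≤ ‖r⁻¹ • (a - b) - r⁻¹ • (a - b')‖ :=
          hφlip _ _
      _ = r⁻¹ * dist b b' := by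
          rw [← smul_sub, show a - b - (a - b') = b' - b by abel, hnorm, dist_comm]
  -- continuity and integrability of g
  have hg_cont₁ : ∀ b, Continuous (fun a => g a b) := by
    intro b
    exact continuous_const.mul (hφl.continuous.comp
      ((continuous_id.sub continuous_const).const_smul r⁻¹))
  have hg_cont₂ : ∀ a, Continuous (fun b => g a b) := by
    intro a
    exact continuous_const.mul (hφl.continuous.comp
      ((continuous_const.sub continuous_id).const_smul r⁻¹))
  have hg_int₂ : ∀ a, Integrable (fun b => g a b) σ := by
    intro a
    refine integrable_of_support_subset_bounded (C := R * Mφ) (s := ball a r)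
      (hg_cont₂ a).aestronglyMeasurable (hfin a r).ne ?_ ?_
    · intro b hb
      rw [mem_ball, dist_comm]
      exact hg_supp a b hb
    · filter_upwards with b
      rw [Real.norm_eq_abs, abs_of_nonneg (hg_nonneg a b)]
      exact hg_le a b
  have hg_int₁ : ∀ b, Integrable (fun a => g a b) σ := by
    intro b
    refine integrable_of_support_subset_bounded (C := R * Mφ) (s := ball b r)
      (hg_cont₁ b).aestronglyMeasurable (hfin b r).ne ?_ ?_
    · intro a ha
      rw [mem_ball]
      exact hg_supp a b ha
    · filter_upwards with a
      rw [Real.norm_eq_abs, abs_of_nonneg (hg_nonneg a b)]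
      exact hg_le a b
  -- phiConv bounds
  have hconv_nonneg : ∀ x, 0 ≤ phiConv d σ φ r x := fun x => by
    rw [hconv_eq]; exact integral_nonneg (hg_nonneg x)
  have htoReal_le : ∀ x ∈ S, ∀ s : ℝ, 0 < s → s ≤ r →
      (σ (ball x s)).toReal ≤ A * s ^ d := by
    intro x hx s hs hsr
    have hsD : ENNReal.ofReal s < EMetric.diam S :=
      lt_of_le_of_lt (ENNReal.ofReal_le_ofReal hsr) hrD
    have := (hreg x hx s hs hsD).2
    exact ENNReal.toReal_le_of_le_ofReal (by positivity) this
  have htoReal_ge : ∀ x ∈ S, A⁻¹ * (r/2) ^ d ≤ (σ (ball x (r/2))).toReal := by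
    intro x hx
    have hsD : ENNReal.ofReal (r/2) < EMetric.diam S :=
      lt_of_le_of_lt (ENNReal.ofReal_le_ofReal (by linarith)) hrD
    have h1 := (hreg x hx (r/2) (by linarith) hsD).1
    exact (ENNReal.ofReal_le_iff_le_toReal (hfin x (r/2)).ne).1 h1
  have hconv_le : ∀ x ∈ S, phiConv d σ φ r x ≤ M := by
    intro x hx
    have h1 : |phiConv d σ φ r x| ≤ (R * Mφ) * (σ (ball x r)).toReal := by
      rw [hconv_eq]
      refine abs_integral_le measurableSet_ball (hfin x r) ?_ ?_
      · intro b hb; rw [mem_ball, dist_comm]; exact hg_supp x b hb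
      · filter_upwards with b _
        rw [abs_of_nonneg (hg_nonneg x b)]; exact hg_le x b
    have h2 : (σ (ball x r)).toReal ≤ A * r ^ d := htoReal_le x hx r hr le_rfl
    have h3 : (R * Mφ) * (σ (ball x r)).toReal ≤ (R * Mφ) * (A * r ^ d) :=
      mul_le_mul_of_nonneg_left h2 (by positivity)
    have h4 : (R * Mφ) * (A * r ^ d) = M := by
      rw [hM_def]; linear_combination (Mφ * A) * hRrd
    calc phiConv d σ φ r x ≤ |phiConv d σ φ r x| := le_abs_self _
      _ ≤ M := by rw [← h4]; exact le_trans h1 h3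
  -- general lower bound for integrals of bump-like functions
  have hlow_gen : ∀ (f : EuclideanSpace ℝ (Fin n) → ℝ), Integrable f σ →
      (∀ w, 0 ≤ f w) → ∀ p ∈ S, (∀ w ∈ ball p (r/2), R * c₀ ≤ f w) →
      m ≤ ∫ w, f w ∂σ := by
    intro f hfi hf0 p hp hfc
    have h1 : ∫ w in ball p (r/2), f w ∂σ ≤ ∫ w, f w ∂σ :=
      setIntegral_le_integral hfi (Filter.Eventually.of_forall hf0)
    have h2 : (R * c₀) * (σ (ball p (r/2))).toReal ≤ ∫ w in ball p (r/2), f w ∂σ := by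
      exact setIntegral_ge_of_const_le_real measurableSet_ball (hfin p (r/2)).ne hfc
        hfi.integrableOn
    have h3 : (R * c₀) * (A⁻¹ * (r/2) ^ d) ≤ (R * c₀) * (σ (ball p (r/2))).toReal :=
      mul_le_mul_of_nonneg_left (htoReal_ge p hp) (by positivity)
    have h4 : (R * c₀) * (A⁻¹ * (r/2) ^ d) = m := by
      rw [hm_def]
      have hhalf : ((r:ℝ)/2) ^ d = r ^ d * (2:ℝ)⁻¹ ^ d := by
        rw [div_eq_mul_inv, mul_pow]
      rw [hhalf]
      linear_combination (c₀ * A⁻¹ * (2:ℝ)⁻¹ ^ d) * hRrd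
    linarith
  have hconv_ge : ∀ x ∈ S, m ≤ phiConv d σ φ r x := by
    intro x hx
    rw [hconv_eq]
    refine hlow_gen (fun b => g x b) (hg_int₂ x) (hg_nonneg x) x hx ?_
    intro w hw
    exact hg_lower x w (by rw [mem_ball, dist_comm] at hw; exact hw)
  -- phiConv difference bound (general points)
  have hconv_diff : ∀ x x', |phiConv d σ φ r x - phiConv d σ φ r x'| ≤
      (R * (r⁻¹ * dist x x')) * ((σ (ball x r)).toReal + (σ (ball x' r)).toReal) := by
    intro x x'
    rw [hconv_eq, hconv_eq, ← integral_sub (hg_int₂ x) (hg_int₂ x')]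
    have hu : σ (ball x r ∪ ball x' r) < ⊤ :=
      lt_of_le_of_lt (measure_union_le _ _) (ENNReal.add_lt_top.2 ⟨hfin _ _, hfin _ _⟩)
    have h1 : |∫ b, (g x b - g x' b) ∂σ| ≤
        (R * (r⁻¹ * dist x x')) * (σ (ball x r ∪ ball x' r)).toReal := by
      refine abs_integral_le (measurableSet_ball.union measurableSet_ball) hu ?_ ?_
      · intro b hb
        rcases ne_or_eq (g x b) 0 with h | h
        · exact mem_union_left _ (by rw [mem_ball, dist_comm]; exact hg_supp x b h)
        · have : g x' b ≠ 0 := fun h' => hb (by rw [h, h']; ring)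
          exact mem_union_right _ (by rw [mem_ball, dist_comm]; exact hg_supp x' b this)
      · filter_upwards with b _
        exact hg_lip₁ x x' b
    refine le_trans h1 (mul_le_mul_of_nonneg_left ?_ (by positivity))
    calc (σ (ball x r ∪ ball x' r)).toReal
        ≤ (σ (ball x r) + σ (ball x' r)).toReal :=
          ENNReal.toReal_mono (ENNReal.add_ne_top.2 ⟨(hfin _ _).ne, (hfin _ _).ne⟩)
            (measure_union_le _ _)
      _ = (σ (ball x r)).toReal + (σ (ball x' r)).toReal :=
          ENNReal.toReal_add (hfin _ _).ne (hfin _ _).ne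
  have hconv_diff_S : ∀ x ∈ S, ∀ x' ∈ S, |phiConv d σ φ r x - phiConv d σ φ r x'| ≤
      2 * A * (r⁻¹ * dist x x') := by
    intro x hx x' hx'
    have h1 := hconv_diff x x'
    have h2 : (σ (ball x r)).toReal + (σ (ball x' r)).toReal ≤ 2 * (A * r ^ d) := by
      have := htoReal_le x hx r hr le_rfl
      have := htoReal_le x' hx' r hr le_rfl
      linarith
    have h3 : (R * (r⁻¹ * dist x x')) * ((σ (ball x r)).toReal + (σ (ball x' r)).toReal)
        ≤ (R * (r⁻¹ * dist x x')) * (2 * (A * r ^ d)) :=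
      mul_le_mul_of_nonneg_left h2 (by positivity)
    have h4 : (R * (r⁻¹ * dist x x')) * (2 * (A * r ^ d)) = 2 * A * (r⁻¹ * dist x x') := by
      linear_combination (2 * A * r⁻¹ * dist x x') * hRrd
    linarith
  -- continuity of phiConv
  have hconv_cont : Continuous (phiConv d σ φ r) := by
    rw [continuous_iff_continuousAt]
    intro x
    have hlip : ∀ u ∈ ball x 1, ∀ v ∈ ball x 1,
        dist (phiConv d σ φ r u) (phiConv d σ φ r v) ≤
          (R * r⁻¹ * (2 * (σ (ball x (r+1))).toReal)) * dist u v := by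
      intro u hu v hv
      rw [Real.dist_eq]
      have h1 := hconv_diff u v
      have hsub : ∀ w ∈ ball x (1:ℝ), (σ (ball w r)).toReal ≤ (σ (ball x (r+1))).toReal := by
        intro w hw
        refine ENNReal.toReal_mono (hfin _ _).ne (measure_mono (ball_subset_ball' ?_))
        rw [mem_ball] at hw
        linarith
      have h2 := hsub u hu
      have h3 := hsub v hv
      have hd0 : (0:ℝ) ≤ dist u v := dist_nonneg
      nlinarith [mul_nonneg (mul_nonneg hR.le hrinv.le) hd0]
    have := (LipschitzOnWith.of_dist_le' hlip).continuousOn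
    exact this.continuousAt (isOpen_ball.mem_nhds (mem_ball_self one_pos))
  -- sKer facts
  have hsKer_nonneg : ∀ x z, 0 ≤ sKer d σ φ r x z := fun x z => by
    rw [hsKer_eq]; exact div_nonneg (hg_nonneg x z) (hconv_nonneg x)
  have hsKer_le : ∀ x ∈ S, ∀ z, sKer d σ φ r x z ≤ R * Mφ * m⁻¹ := by
    intro x hx z
    rw [hsKer_eq, ← div_eq_mul_inv (R * Mφ) m]
    exact div_le_div₀ (by positivity) (hg_le x z) hm (hconv_ge x hx)
  have hsKer_supp : ∀ x z, sKer d σ φ r x z ≠ 0 → dist x z < r := by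
    intro x z h
    refine hg_supp x z fun h0 => h ?_
    rw [hsKer_eq, h0, zero_div]
  have hsKer_meas : ∀ z, Measurable (fun x' => sKer d σ φ r x' z) := by
    intro z
    exact ((hg_cont₁ z).measurable).div hconv_cont.measurable
  set W : EuclideanSpace ℝ (Fin n) → ℝ := fun z => ∫ x', sKer d σ φ r x' z ∂σ with hW_def
  have hW_int : ∀ z, Integrable (fun x' => sKer d σ φ r x' z) σ := by
    intro z
    refine integrable_of_support_subset_bounded (C := R * Mφ * m⁻¹) (s := ball z r)
      (hsKer_meas z).aestronglyMeasurable (hfin z r).ne ?_ ?_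
    · intro x' hx'
      rw [mem_ball]
      exact hsKer_supp x' z hx'
    · filter_upwards [haeS] with x' hx'
      rw [Real.norm_eq_abs, abs_of_nonneg (hsKer_nonneg x' z)]
      exact hsKer_le x' hx' z
  have hW_nonneg : ∀ z, 0 ≤ W z := fun z => integral_nonneg fun x' => hsKer_nonneg x' z
  have hW_lower : ∀ z ∈ S, w₀ ≤ W z := by
    intro z hz
    have hmono : ∀ᵐ x' ∂σ, M⁻¹ * g x' z ≤ sKer d σ φ r x' z := by
      filter_upwards [haeS] with x' hx'
      rw [hsKer_eq, inv_mul_eq_div]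
      have h1 : 0 < phiConv d σ φ r x' := lt_of_lt_of_le hm (hconv_ge x' hx')
      exact div_le_div_of_nonneg_left (hg_nonneg x' z) h1 (hconv_le x' hx')
    have hint1 : Integrable (fun x' => M⁻¹ * g x' z) σ := (hg_int₁ z).const_mul _
    have h2 : ∫ x', M⁻¹ * g x' z ∂σ ≤ W z :=
      integral_mono_ae hint1 (hW_int z) hmono
    have h3 : ∫ x', M⁻¹ * g x' z ∂σ = M⁻¹ * ∫ x', g x' z ∂σ := integral_const_mul _ _
    have h4 : m ≤ ∫ x', g x' z ∂σ := by
      refine hlow_gen (fun x' => g x' z) (hg_int₁ z) (fun x' => hg_nonneg x' z) z hz ?_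
      intro w hw
      exact hg_lower w z (mem_ball.1 hw)
    have h5 : w₀ ≤ M⁻¹ * ∫ x', g x' z ∂σ := by
      rw [hw₀_def]
      exact mul_le_mul_of_nonneg_left h4 (by positivity)
    linarith
  -- W difference bound and continuity
  have hW_diff : ∀ z z', |W z - W z'| ≤
      (R * (r⁻¹ * dist z z') * m⁻¹) * ((σ (ball z r)).toReal + (σ (ball z' r)).toReal) := by
    intro z z'
    rw [hW_def]
    simp only
    rw [← integral_sub (hW_int z) (hW_int z')]
    have hu : σ (ball z r ∪ ball z' r) < ⊤ :=
      lt_of_le_of_lt (measure_union_le _ _) (ENNReal.add_lt_top.2 ⟨hfin _ _, hfin _ _⟩)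
    have h1 : |∫ x', (sKer d σ φ r x' z - sKer d σ φ r x' z') ∂σ| ≤
        (R * (r⁻¹ * dist z z') * m⁻¹) * (σ (ball z r ∪ ball z' r)).toReal := by
      refine abs_integral_le (measurableSet_ball.union measurableSet_ball) hu ?_ ?_
      · intro x' hx'
        rcases ne_or_eq (sKer d σ φ r x' z) 0 with h | h
        · exact mem_union_left _ (by rw [mem_ball]; exact hsKer_supp x' z h)
        · have h' : sKer d σ φ r x' z' ≠ 0 := fun h'' => hx' (by rw [h, h'']; ring)
          exact mem_union_right _ (by rw [mem_ball]; exact hsKer_supp x' z' h')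
      · filter_upwards [haeS] with x' hx' _
        have h1 : 0 < phiConv d σ φ r x' := lt_of_lt_of_le hm (hconv_ge x' hx')
        rw [hsKer_eq, hsKer_eq, div_sub_div_same, abs_div, abs_of_pos h1]
        calc |g x' z - g x' z'| / phiConv d σ φ r x'
            ≤ (R * (r⁻¹ * dist z z')) / m :=
              div_le_div₀ (by positivity) (hg_lip₂ x' z z') hm (hconv_ge x' hx')
          _ = R * (r⁻¹ * dist z z') * m⁻¹ := by rw [div_eq_mul_inv]
    refine le_trans h1 (mul_le_mul_of_nonneg_left ?_ (by positivity))
    calc (σ (ball z r ∪ ball z' r)).toReal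
        ≤ (σ (ball z r) + σ (ball z' r)).toReal :=
          ENNReal.toReal_mono (ENNReal.add_ne_top.2 ⟨(hfin _ _).ne, (hfin _ _).ne⟩)
            (measure_union_le _ _)
      _ = (σ (ball z r)).toReal + (σ (ball z' r)).toReal :=
          ENNReal.toReal_add (hfin _ _).ne (hfin _ _).ne
  have hW_cont : Continuous W := by
    rw [continuous_iff_continuousAt]
    intro x
    have hlip : ∀ u ∈ ball x 1, ∀ v ∈ ball x 1,
        dist (W u) (W v) ≤
          (R * r⁻¹ * m⁻¹ * (2 * (σ (ball x (r+1))).toReal)) * dist u v := by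
      intro u hu v hv
      rw [Real.dist_eq]
      have h1 := hW_diff u v
      have hsub : ∀ w ∈ ball x (1:ℝ), (σ (ball w r)).toReal ≤ (σ (ball x (r+1))).toReal := by
        intro w hw
        refine ENNReal.toReal_mono (hfin _ _).ne (measure_mono (ball_subset_ball' ?_))
        rw [mem_ball] at hw
        linarith
      have h2 := hsub u hu
      have h3 := hsub v hv
      have hd0 : (0:ℝ) ≤ dist u v := dist_nonneg
      nlinarith [mul_nonneg (mul_nonneg (mul_nonneg hR.le hrinv.le) hd0) (inv_pos.2 hm).le]
    have := (LipschitzOnWith.of_dist_le' hlip).continuousOn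
    exact this.continuousAt (isOpen_ball.mem_nhds (mem_ball_self one_pos))
  -- sKer Lipschitz in first variable on S
  have hsKer_diff : ∀ x ∈ S, ∀ x' ∈ S, ∀ z,
      |sKer d σ φ r x z - sKer d σ φ r x' z| ≤ K * dist x x' * (R * r⁻¹) := by
    intro x hx x' hx' z
    have hp : m ≤ phiConv d σ φ r x := hconv_ge x hx
    have hq : m ≤ phiConv d σ φ r x' := hconv_ge x' hx'
    have hp0 : 0 < phiConv d σ φ r x := lt_of_lt_of_le hm hp
    have hq0 : 0 < phiConv d σ φ r x' := lt_of_lt_of_le hm hq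
    set a := g x z with ha_def
    set b := g x' z with hb_def
    set p := phiConv d σ φ r x with hp_def
    set q := phiConv d σ φ r x' with hq_def
    have hid : a / p - b / q = (a - b) / p + b * (q - p) / (p * q) := by
      field_simp
      ring
    have h1 : |(a - b) / p| ≤ R * (r⁻¹ * dist x x') * m⁻¹ := by
      rw [abs_div, abs_of_pos hp0]
      calc |a - b| / p ≤ (R * (r⁻¹ * dist x x')) / m :=
            div_le_div₀ (by positivity) (hg_lip₁ x x' z) hm hp
        _ = R * (r⁻¹ * dist x x') * m⁻¹ := by rw [div_eq_mul_inv]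
    have h2 : |b * (q - p) / (p * q)| ≤
        (R * Mφ) * (2 * A * (r⁻¹ * dist x x')) * (m⁻¹ * m⁻¹) := by
      rw [abs_div, abs_mul, abs_of_pos (mul_pos hp0 hq0)]
      have hb1 : |b| ≤ R * Mφ := by
        rw [abs_of_nonneg (hg_nonneg x' z)]; exact hg_le x' z
      have hqp : |q - p| ≤ 2 * A * (r⁻¹ * dist x x') := by
        rw [abs_sub_comm]
        exact hconv_diff_S x hx x' hx'
      calc |b| * |q - p| / (p * q) ≤ ((R * Mφ) * (2 * A * (r⁻¹ * dist x x'))) / (m * m) :=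
            div_le_div₀ (by positivity)
              (mul_le_mul hb1 hqp (abs_nonneg _) (by positivity))
              (by positivity) (mul_le_mul hp hq hm.le (le_trans hm.le hp))
        _ = (R * Mφ) * (2 * A * (r⁻¹ * dist x x')) * (m⁻¹ * m⁻¹) := by
            rw [div_eq_mul_inv, mul_inv]
    calc |sKer d σ φ r x z - sKer d σ φ r x' z| = |a / p - b / q| := by
          rw [hsKer_eq, hsKer_eq]
      _ = |(a - b) / p + b * (q - p) / (p * q)| := by rw [hid]
      _ ≤ |(a - b) / p| + |b * (q - p) / (p * q)| := abs_add_le _ _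
      _ ≤ R * (r⁻¹ * dist x x') * m⁻¹ +
          (R * Mφ) * (2 * A * (r⁻¹ * dist x x')) * (m⁻¹ * m⁻¹) := add_le_add h1 h2
      _ = K * dist x x' * (R * r⁻¹) := by rw [hK_def]; ring
  -- integrand for sTildeKer
  set F : EuclideanSpace ℝ (Fin n) → EuclideanSpace ℝ (Fin n) →
      EuclideanSpace ℝ (Fin n) → ℝ :=
    fun x y z => sKer d σ φ r x z * (W z)⁻¹ * sKer d σ φ r y z with hF_def
  have hsTilde_eq : ∀ x y, sTildeKer d σ φ r x y = ∫ z, F x y z ∂σ := fun _ _ => rfl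
  have hsKer_measz : ∀ x, Measurable (fun z => sKer d σ φ r x z) :=
    fun x => ((hg_cont₂ x).measurable).div measurable_const
  have hF_meas : ∀ x y, Measurable (F x y) := by
    intro x y
    exact ((hsKer_measz x).mul (hW_cont.measurable.inv)).mul (hsKer_measz y)
  have hF_int : ∀ x, x ∈ S → ∀ y ∈ S, Integrable (F x y) σ := by
    intro x hx y hy
    refine integrable_of_support_subset_bounded
      (C := (R * Mφ * m⁻¹) * w₀⁻¹ * (R * Mφ * m⁻¹)) (s := ball x r)
      (hF_meas x y).aestronglyMeasurable (hfin x r).ne ?_ ?_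
    · intro z hz
      have h1 : sKer d σ φ r x z ≠ 0 := by
        intro h0
        apply hz
        rw [hF_def]
        simp [h0]
      rw [mem_ball, dist_comm]
      exact hsKer_supp x z h1
    · filter_upwards [haeS] with z hz
      rw [Real.norm_eq_abs, hF_def]
      simp only
      rw [abs_mul, abs_mul, abs_of_nonneg (hsKer_nonneg x z),
        abs_of_nonneg (hsKer_nonneg y z), abs_of_nonneg (inv_nonneg.2 (hW_nonneg z))]
      have hWinv : (W z)⁻¹ ≤ w₀⁻¹ := inv_anti₀ hw₀ (hW_lower z hz)
      have hx1 : sKer d σ φ r x z ≤ R * Mφ * m⁻¹ := hsKer_le x hx z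
      have hy1 : sKer d σ φ r y z ≤ R * Mφ * m⁻¹ := hsKer_le y hy z
      refine mul_le_mul (mul_le_mul hx1 hWinv (inv_nonneg.2 (hW_nonneg z))
        (by positivity)) hy1 (hsKer_nonneg y z) (by positivity)
  have hRr1 : r ^ (-(d:ℝ) - 1) = R * r⁻¹ := by
    rw [show (-(d:ℝ) - 1) = (-(d:ℝ)) + (-1) by ring, Real.rpow_add hr, Real.rpow_neg_one,
      ← hR_def]
  constructor
  · -- support claim
    intro x hx y hy
    rw [Function.mem_support] at hy
    by_contra hmem
    apply hy
    have hdist : 2 * r ≤ dist y x := not_lt.1 fun h => hmem (mem_ball.2 h)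
    have hzero : ∀ z, F x y z = 0 := by
      intro z
      rcases eq_or_ne (sKer d σ φ r x z) 0 with h | h
      · rw [hF_def]; simp [h]
      · have h1 : dist x z < r := hsKer_supp x z h
        have h2 : sKer d σ φ r y z = 0 := by
          by_contra h3
          have h4 : dist y z < r := hsKer_supp y z h3
          have ht := dist_triangle y z x
          rw [dist_comm z x] at ht
          linarith
        rw [hF_def]; simp [h2]
    show sTildeKer d σ φ r x y = 0
    calc sTildeKer d σ φ r x y = ∫ z, F x y z ∂σ := hsTilde_eq x y
      _ = ∫ _, (0:ℝ) ∂σ := integral_congr_ae (Filter.Eventually.of_forall hzero)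
      _ = 0 := integral_zero _ _
  · intro x hx x' hx' y hy
    have hdiffint : sTildeKer d σ φ r x y - sTildeKer d σ φ r x' y =
        ∫ z, (F x y z - F x' y z) ∂σ := by
      rw [hsTilde_eq, hsTilde_eq, integral_sub (hF_int x hx y hy) (hF_int x' hx' y hy)]
    rw [hdiffint]
    have hbound : |∫ z, (F x y z - F x' y z) ∂σ| ≤
        ((K * dist x x' * (R * r⁻¹)) * w₀⁻¹ * (R * Mφ * m⁻¹)) * (σ (ball y r)).toReal := by
      refine abs_integral_le measurableSet_ball (hfin y r) ?_ ?_
      · intro z hz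
        have h1 : sKer d σ φ r y z ≠ 0 := by
          intro h0; apply hz; rw [hF_def]; simp [h0]
        rw [mem_ball, dist_comm]
        exact hsKer_supp y z h1
      · filter_upwards [haeS] with z hz _
        have heq : F x y z - F x' y z =
            (sKer d σ φ r x z - sKer d σ φ r x' z) * (W z)⁻¹ * sKer d σ φ r y z := by
          rw [hF_def]; ring
        rw [heq, abs_mul, abs_mul, abs_of_nonneg (inv_nonneg.2 (hW_nonneg z)),
          abs_of_nonneg (hsKer_nonneg y z)]
        have hWinv : (W z)⁻¹ ≤ w₀⁻¹ := inv_anti₀ hw₀ (hW_lower z hz)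
        refine mul_le_mul (mul_le_mul (hsKer_diff x hx x' hx' z) hWinv
          (inv_nonneg.2 (hW_nonneg z)) (by positivity)) (hsKer_le y hy z)
          (hsKer_nonneg y z) (by positivity)
    refine le_trans hbound ?_
    have h2 : (σ (ball y r)).toReal ≤ A * r ^ d := htoReal_le y hy r hr le_rfl
    have h3 : ((K * dist x x' * (R * r⁻¹)) * w₀⁻¹ * (R * Mφ * m⁻¹)) * (σ (ball y r)).toReal
        ≤ ((K * dist x x' * (R * r⁻¹)) * w₀⁻¹ * (R * Mφ * m⁻¹)) * (A * r ^ d) :=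
      mul_le_mul_of_nonneg_left h2 (by positivity)
    have h4 : ((K * dist x x' * (R * r⁻¹)) * w₀⁻¹ * (R * Mφ * m⁻¹)) * (A * r ^ d) =
        (K * w₀⁻¹ * (Mφ * m⁻¹) * A) * dist x x' * (R * r⁻¹) := by
      linear_combination (K * dist x x' * r⁻¹ * R * w₀⁻¹ * Mφ * m⁻¹ * A) * hRrd
    rw [hRr1]
    linarith
end
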